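/- arXiv:2103.04332 — 3 statements merged into one kernel-verified Lean document; each statement's English description precedes it below -/
import Mathlib

section
/- A permutation π of [n] avoids all of the patterns 321, 2413, and 3142 if and only if π can be written as a direct sum of permutations each of which is either the trivial permutation 1 or of the form id_{r1} ⊖ id_{r2} for some r1, r2 ≥ 1. -/
/-- `π` is (the one-line notation of) a permutation of `{1,…,n}`. -/
def IsPermList (n : ℕ) (π : List ℕ) : Prop := π.Perm (List.range' 1 n)

/-- Two sequences are order-isomorphic. -/
def OrdIso (u v : List ℕ) : Prop :=
  u.length = v.length ∧
    ∀ i j : ℕ, i < u.length → j < u.length → (u[i]! < u[j]! ↔ v[i]! < v[j]!)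

/-- `π` contains the pattern `σ`: some subsequence of `π` is order-isomorphic to `σ`. -/
def ContainsPat (π σ : List ℕ) : Prop := ∃ t : List ℕ, t.Sublist π ∧ OrdIso t σ

/-- `π` avoids the pattern `σ`. -/
def AvoidsPat (π σ : List ℕ) : Prop := ¬ ContainsPat π σ

/-- Direct sum of permutations in one-line notation. -/
def dsumL (x y : List ℕ) : List ℕ := x ++ y.map (· + x.length)

/-- Skew sum of permutations in one-line notation. -/
def ssumL (x y : List ℕ) : List ℕ := x.map (· + y.length) ++ y

/-- The identity permutation of size `r` in one-line notation. -/
def idL (r : ℕ) : List ℕ := List.range' 1 r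

/-- `π` avoids all of the patterns 321, 2413 and 3142. -/
def AvoidsAll (π : List ℕ) : Prop :=
  AvoidsPat π [3, 2, 1] ∧ AvoidsPat π [2, 4, 1, 3] ∧ AvoidsPat π [3, 1, 4, 2]

/-! ### Containment characterizations -/

lemma contains321_iff (π : List ℕ) :
    ContainsPat π [3,2,1] ↔ ∃ a b c, [a,b,c].Sublist π ∧ c < b ∧ b < a := by
  constructor
  · rintro ⟨t, ht, hlen, h⟩
    have hl3 : t.length = 3 := by simpa using hlen
    obtain ⟨x, y, z, rfl⟩ : ∃ x y z, t = [x, y, z] := by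
      rcases t with _|⟨x,_|⟨y,_|⟨z,_|⟨w,t⟩⟩⟩⟩ <;> simp_all
    refine ⟨x, y, z, ht, ?_, ?_⟩
    · simpa using (h 2 1 (by simp) (by simp)).2 (by decide)
    · simpa using (h 1 0 (by simp) (by simp)).2 (by decide)
  · rintro ⟨a, b, c, hs, h1, h2⟩
    refine ⟨[a,b,c], hs, by simp, ?_⟩
    intro i j hi hj
    simp at hi hj
    interval_cases i <;> interval_cases j <;> simp <;> omega

lemma contains2413_iff (π : List ℕ) :
    ContainsPat π [2,4,1,3] ↔ ∃ a b c d, [a,b,c,d].Sublist π ∧ c < a ∧ a < d ∧ d < b := by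
  constructor
  · rintro ⟨t, ht, hlen, h⟩
    have hl4 : t.length = 4 := by simpa using hlen
    obtain ⟨x, y, z, w, rfl⟩ : ∃ x y z w, t = [x, y, z, w] := by
      rcases t with _|⟨x,_|⟨y,_|⟨z,_|⟨w,_|⟨v,t⟩⟩⟩⟩⟩ <;> simp_all
    refine ⟨x, y, z, w, ht, ?_, ?_, ?_⟩
    · simpa using (h 2 0 (by simp) (by simp)).2 (by decide)
    · simpa using (h 0 3 (by simp) (by simp)).2 (by decide)
    · simpa using (h 3 1 (by simp) (by simp)).2 (by decide)
  · rintro ⟨a, b, c, d, hs, h1, h2, h3⟩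
    refine ⟨[a,b,c,d], hs, by simp, ?_⟩
    intro i j hi hj
    simp at hi hj
    interval_cases i <;> interval_cases j <;> simp <;> omega

lemma contains3142_iff (π : List ℕ) :
    ContainsPat π [3,1,4,2] ↔ ∃ a b c d, [a,b,c,d].Sublist π ∧ b < d ∧ d < a ∧ a < c := by
  constructor
  · rintro ⟨t, ht, hlen, h⟩
    have hl4 : t.length = 4 := by simpa using hlen
    obtain ⟨x, y, z, w, rfl⟩ : ∃ x y z w, t = [x, y, z, w] := by
      rcases t with _|⟨x,_|⟨y,_|⟨z,_|⟨w,_|⟨v,t⟩⟩⟩⟩⟩ <;> simp_all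
    refine ⟨x, y, z, w, ht, ?_, ?_, ?_⟩
    · simpa using (h 1 3 (by simp) (by simp)).2 (by decide)
    · simpa using (h 3 0 (by simp) (by simp)).2 (by decide)
    · simpa using (h 0 2 (by simp) (by simp)).2 (by decide)
  · rintro ⟨a, b, c, d, hs, h1, h2, h3⟩
    refine ⟨[a,b,c,d], hs, by simp, ?_⟩
    intro i j hi hj
    simp at hi hj
    interval_cases i <;> interval_cases j <;> simp <;> omega

/-! ### Basic stability lemmas -/

lemma avoidsAll_sublist {π π' : List ℕ} (h : π.Sublist π') (h' : AvoidsAll π') :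
    AvoidsAll π := by
  obtain ⟨h1, h2, h3⟩ := h'
  refine ⟨fun ⟨t, ht, hi⟩ => h1 ⟨t, ht.trans h, hi⟩,
    fun ⟨t, ht, hi⟩ => h2 ⟨t, ht.trans h, hi⟩,
    fun ⟨t, ht, hi⟩ => h3 ⟨t, ht.trans h, hi⟩⟩

lemma avoidsAll_map {f : ℕ → ℕ} {l : List ℕ}
    (hf : ∀ x ∈ l, ∀ y ∈ l, f x < f y → x < y) (hl : AvoidsAll l) :
    AvoidsAll (l.map f) := by
  obtain ⟨h1, h2, h3⟩ := hl
  refine ⟨?_, ?_, ?_⟩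
  · rw [AvoidsPat, contains321_iff]
    rintro ⟨a, b, c, hs, hh1, hh2⟩
    obtain ⟨l', hl', heq⟩ := List.sublist_map_iff.1 hs
    obtain ⟨x, y, z, rfl⟩ : ∃ x y z, l' = [x, y, z] := by
      rcases l' with _|⟨x,_|⟨y,_|⟨z,_|⟨w,t⟩⟩⟩⟩ <;> simp_all
    simp only [List.map_cons, List.map_nil, List.cons.injEq, and_true] at heq
    obtain ⟨rfl, rfl, rfl⟩ := heq
    have hx : x ∈ l := hl'.subset (by simp)
    have hy : y ∈ l := hl'.subset (by simp)
    have hz : z ∈ l := hl'.subset (by simp)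
    exact h1 ((contains321_iff l).2 ⟨x, y, z, hl', hf z hz y hy hh1, hf y hy x hx hh2⟩)
  · rw [AvoidsPat, contains2413_iff]
    rintro ⟨a, b, c, d, hs, hh1, hh2, hh3⟩
    obtain ⟨l', hl', heq⟩ := List.sublist_map_iff.1 hs
    obtain ⟨x, y, z, w, rfl⟩ : ∃ x y z w, l' = [x, y, z, w] := by
      rcases l' with _|⟨x,_|⟨y,_|⟨z,_|⟨w,_|⟨v,t⟩⟩⟩⟩⟩ <;> simp_all
    simp only [List.map_cons, List.map_nil, List.cons.injEq, and_true] at heq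
    obtain ⟨rfl, rfl, rfl, rfl⟩ := heq
    have hx : x ∈ l := hl'.subset (by simp)
    have hy : y ∈ l := hl'.subset (by simp)
    have hz : z ∈ l := hl'.subset (by simp)
    have hw : w ∈ l := hl'.subset (by simp)
    exact h2 ((contains2413_iff l).2
      ⟨x, y, z, w, hl', hf z hz x hx hh1, hf x hx w hw hh2, hf w hw y hy hh3⟩)
  · rw [AvoidsPat, contains3142_iff]
    rintro ⟨a, b, c, d, hs, hh1, hh2, hh3⟩
    obtain ⟨l', hl', heq⟩ := List.sublist_map_iff.1 hs
    obtain ⟨x, y, z, w, rfl⟩ : ∃ x y z w, l' = [x, y, z, w] := by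
      rcases l' with _|⟨x,_|⟨y,_|⟨z,_|⟨w,_|⟨v,t⟩⟩⟩⟩⟩ <;> simp_all
    simp only [List.map_cons, List.map_nil, List.cons.injEq, and_true] at heq
    obtain ⟨rfl, rfl, rfl, rfl⟩ := heq
    have hx : x ∈ l := hl'.subset (by simp)
    have hy : y ∈ l := hl'.subset (by simp)
    have hz : z ∈ l := hl'.subset (by simp)
    have hw : w ∈ l := hl'.subset (by simp)
    exact h3 ((contains3142_iff l).2
      ⟨x, y, z, w, hl', hf y hy w hw hh1, hf w hw x hx hh2, hf x hx z hz hh3⟩)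

/-! ### Two-run lists avoid all patterns -/

lemma pair_of_pairwise {l : List ℕ} (h : l.Pairwise (· < ·)) {x y : ℕ}
    (hs : [x, y].Sublist l) : x < y :=
  List.pairwise_iff_forall_sublist.1 h hs

lemma avoidsAll_two_run {u w : List ℕ} (hu : u.Pairwise (· < ·)) (hw : w.Pairwise (· < ·))
    (huw : ∀ a ∈ u, ∀ b ∈ w, b < a) : AvoidsAll (u ++ w) := by
  refine ⟨?_, ?_, ?_⟩
  · rw [AvoidsPat, contains321_iff]
    rintro ⟨a, b, c, hs, h1, h2⟩
    obtain ⟨t1, t2, heq, hs1, hs2⟩ := List.sublist_append_iff.1 hs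
    rcases t1 with _|⟨p,_|⟨q,_|⟨r,_|⟨s,t1⟩⟩⟩⟩ <;>
        simp only [List.nil_append, List.cons_append, List.cons.injEq] at heq <;>
        [skip; (obtain ⟨rfl, heq⟩ := heq); (obtain ⟨rfl, rfl, heq⟩ := heq);
         (obtain ⟨rfl, rfl, rfl, heq⟩ := heq); skip]
    · subst heq
      have hab : a < b := pair_of_pairwise hw (List.Sublist.trans (by simp) hs2)
      omega
    · subst heq
      have hbc : b < c := pair_of_pairwise hw hs2
      omega
    · subst heq
      have hbw := huw a (hs1.subset (by simp)) c (hs2.subset (by simp))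
      have hab : a < b := pair_of_pairwise hu hs1
      omega
    · subst heq
      have hab : a < b := pair_of_pairwise hu (List.Sublist.trans (by simp) hs1)
      omega
    · simp at heq
  · rw [AvoidsPat, contains2413_iff]
    rintro ⟨a, b, c, d, hs, h1, h2, h3⟩
    obtain ⟨t1, t2, heq, hs1, hs2⟩ := List.sublist_append_iff.1 hs
    rcases t1 with _|⟨p,_|⟨q,_|⟨r,_|⟨s,_|⟨e,t1⟩⟩⟩⟩⟩ <;>
        simp only [List.nil_append, List.cons_append, List.cons.injEq] at heq <;>
        [skip; (obtain ⟨rfl, heq⟩ := heq); (obtain ⟨rfl, rfl, heq⟩ := heq);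
         (obtain ⟨rfl, rfl, rfl, heq⟩ := heq); (obtain ⟨rfl, rfl, rfl, rfl, heq⟩ := heq); skip]
    · subst heq
      have hab : a < b := pair_of_pairwise hw (List.Sublist.trans (by simp) hs2)
      have hbc : b < c := pair_of_pairwise hw (List.Sublist.trans (by simp) hs2)
      omega
    · subst heq
      have := huw a (hs1.subset (by simp)) d (hs2.subset (by simp))
      omega
    · subst heq
      have := huw a (hs1.subset (by simp)) d (hs2.subset (by simp))
      omega
    · subst heq
      have hab : a < b := pair_of_pairwise hu (List.Sublist.trans (by simp) hs1)
      have hbc : b < c := pair_of_pairwise hu (List.Sublist.trans (by simp) hs1)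
      omega
    · subst heq
      have hab : a < b := pair_of_pairwise hu (List.Sublist.trans (by simp) hs1)
      have hbc : b < c := pair_of_pairwise hu (List.Sublist.trans (by simp) hs1)
      omega
    · simp at heq
  · rw [AvoidsPat, contains3142_iff]
    rintro ⟨a, b, c, d, hs, h1, h2, h3⟩
    obtain ⟨t1, t2, heq, hs1, hs2⟩ := List.sublist_append_iff.1 hs
    rcases t1 with _|⟨p,_|⟨q,_|⟨r,_|⟨s,_|⟨e,t1⟩⟩⟩⟩⟩ <;>
        simp only [List.nil_append, List.cons_append, List.cons.injEq] at heq <;>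
        [skip; (obtain ⟨rfl, heq⟩ := heq); (obtain ⟨rfl, rfl, heq⟩ := heq);
         (obtain ⟨rfl, rfl, rfl, heq⟩ := heq); (obtain ⟨rfl, rfl, rfl, rfl, heq⟩ := heq); skip]
    · subst heq
      have hab : a < b := pair_of_pairwise hw (List.Sublist.trans (by simp) hs2)
      omega
    · subst heq
      have := huw a (hs1.subset (by simp)) c (hs2.subset (by simp))
      omega
    · subst heq
      have hab : a < b := pair_of_pairwise hu hs1
      omega
    · subst heq
      have hab : a < b := pair_of_pairwise hu (List.Sublist.trans (by simp) hs1)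
      omega
    · subst heq
      have hab : a < b := pair_of_pairwise hu (List.Sublist.trans (by simp) hs1)
      omega
    · simp at heq

/-! ### Direct sums of bounded avoiders avoid all patterns -/

lemma avoidsAll_dsum {x y : List ℕ} (hxb : ∀ v ∈ x, v ≤ x.length) (hyb : ∀ v ∈ y, 1 ≤ v)
    (hx : AvoidsAll x) (hy : AvoidsAll y) : AvoidsAll (dsumL x y) := by
  have hy' : AvoidsAll (y.map (· + x.length)) :=
    avoidsAll_map (by intro a _ b _ h; omega) hy
  have hcross : ∀ u ∈ x, ∀ v ∈ y.map (· + x.length), u < v := by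
    intro u hu v hv
    simp only [List.mem_map] at hv
    obtain ⟨v', hv', rfl⟩ := hv
    have := hxb u hu
    have := hyb v' hv'
    omega
  obtain ⟨hx1, hx2, hx3⟩ := hx
  obtain ⟨hy1, hy2, hy3⟩ := hy'
  rw [dsumL]
  refine ⟨?_, ?_, ?_⟩
  · rw [AvoidsPat, contains321_iff]
    rintro ⟨a, b, c, hs, h1, h2⟩
    obtain ⟨t1, t2, heq, hs1, hs2⟩ := List.sublist_append_iff.1 hs
    rcases t1 with _|⟨p,_|⟨q,_|⟨r,_|⟨s,t1⟩⟩⟩⟩ <;>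
        simp only [List.nil_append, List.cons_append, List.cons.injEq] at heq <;>
        [skip; (obtain ⟨rfl, heq⟩ := heq); (obtain ⟨rfl, rfl, heq⟩ := heq);
         (obtain ⟨rfl, rfl, rfl, heq⟩ := heq); skip]
    · subst heq
      exact hy1 ((contains321_iff _).2 ⟨a, b, c, hs2, h1, h2⟩)
    · subst heq
      have := hcross a (hs1.subset (by simp)) b (hs2.subset (by simp))
      omega
    · subst heq
      have := hcross b (hs1.subset (by simp)) c (hs2.subset (by simp))
      omega
    · subst heq
      exact hx1 ((contains321_iff _).2 ⟨a, b, c, hs1, h1, h2⟩)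
    · simp at heq
  · rw [AvoidsPat, contains2413_iff]
    rintro ⟨a, b, c, d, hs, h1, h2, h3⟩
    obtain ⟨t1, t2, heq, hs1, hs2⟩ := List.sublist_append_iff.1 hs
    rcases t1 with _|⟨p,_|⟨q,_|⟨r,_|⟨s,_|⟨e,t1⟩⟩⟩⟩⟩ <;>
        simp only [List.nil_append, List.cons_append, List.cons.injEq] at heq <;>
        [skip; (obtain ⟨rfl, heq⟩ := heq); (obtain ⟨rfl, rfl, heq⟩ := heq);
         (obtain ⟨rfl, rfl, rfl, heq⟩ := heq); (obtain ⟨rfl, rfl, rfl, rfl, heq⟩ := heq); skip]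
    · subst heq
      exact hy2 ((contains2413_iff _).2 ⟨a, b, c, d, hs2, h1, h2, h3⟩)
    · subst heq
      have := hcross a (hs1.subset (by simp)) c (hs2.subset (by simp))
      omega
    · subst heq
      have := hcross a (hs1.subset (by simp)) c (hs2.subset (by simp))
      omega
    · subst heq
      have := hcross b (hs1.subset (by simp)) d (hs2.subset (by simp))
      omega
    · subst heq
      exact hx2 ((contains2413_iff _).2 ⟨a, b, c, d, hs1, h1, h2, h3⟩)
    · simp at heq
  · rw [AvoidsPat, contains3142_iff]
    rintro ⟨a, b, c, d, hs, h1, h2, h3⟩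
    obtain ⟨t1, t2, heq, hs1, hs2⟩ := List.sublist_append_iff.1 hs
    rcases t1 with _|⟨p,_|⟨q,_|⟨r,_|⟨s,_|⟨e,t1⟩⟩⟩⟩⟩ <;>
        simp only [List.nil_append, List.cons_append, List.cons.injEq] at heq <;>
        [skip; (obtain ⟨rfl, heq⟩ := heq); (obtain ⟨rfl, rfl, heq⟩ := heq);
         (obtain ⟨rfl, rfl, rfl, heq⟩ := heq); (obtain ⟨rfl, rfl, rfl, rfl, heq⟩ := heq); skip]
    · subst heq
      exact hy3 ((contains3142_iff _).2 ⟨a, b, c, d, hs2, h1, h2, h3⟩)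
    · subst heq
      have := hcross a (hs1.subset (by simp)) b (hs2.subset (by simp))
      omega
    · subst heq
      have := hcross a (hs1.subset (by simp)) d (hs2.subset (by simp))
      omega
    · subst heq
      have := hcross a (hs1.subset (by simp)) d (hs2.subset (by simp))
      omega
    · subst heq
      exact hx3 ((contains3142_iff _).2 ⟨a, b, c, d, hs1, h1, h2, h3⟩)
    · simp at heq


/-! ### Fold and block lemmas -/

lemma dsum_nil_left (y : List ℕ) : dsumL [] y = y := by
  simp [dsumL]

lemma dsum_nil_right (x : List ℕ) : dsumL x [] = x := by
  simp [dsumL]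

lemma dsum_assoc (x y z : List ℕ) : dsumL (dsumL x y) z = dsumL x (dsumL y z) := by
  simp only [dsumL, List.length_append, List.length_map, List.map_append, List.map_map,
    List.append_assoc]
  congr 2
  apply List.map_congr_left
  intro v _
  simp [Function.comp]
  omega

lemma foldl_dsum (L : List (List ℕ)) (x : List ℕ) :
    L.foldl dsumL x = dsumL x (L.foldl dsumL []) := by
  induction L generalizing x with
  | nil => simp [dsum_nil_right]
  | cons c L ih =>
      rw [List.foldl_cons, ih (dsumL x c), List.foldl_cons, dsum_nil_left, ih c, dsum_assoc]

lemma foldl_dsum_cons (b : List ℕ) (L : List (List ℕ)) :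
    (b :: L).foldl dsumL [] = dsumL b (L.foldl dsumL []) := by
  rw [List.foldl_cons, dsum_nil_left]
  exact foldl_dsum L b

lemma block_eq (r1 r2 : ℕ) :
    ssumL (idL r1) (idL r2) = List.range' (r2 + 1) r1 ++ List.range' 1 r2 := by
  rw [ssumL, idL, idL, List.length_range']
  rw [show ((· + r2) : ℕ → ℕ) = fun x => r2 + x from funext fun x => Nat.add_comm x r2]
  rw [List.map_add_range']

lemma block_length (r1 r2 : ℕ) : (ssumL (idL r1) (idL r2)).length = r1 + r2 := by
  simp [ssumL, idL]

lemma block_mem {r1 r2 v : ℕ} (h : v ∈ ssumL (idL r1) (idL r2)) : 1 ≤ v ∧ v ≤ r1 + r2 := by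
  rw [block_eq] at h
  rcases List.mem_append.1 h with h | h <;> rw [List.mem_range'_1] at h <;> omega

lemma block_avoids (r1 r2 : ℕ) : AvoidsAll (ssumL (idL r1) (idL r2)) := by
  rw [block_eq]
  apply avoidsAll_two_run (List.pairwise_lt_range') (List.pairwise_lt_range')
  intro a ha b hb
  rw [List.mem_range'_1] at ha hb
  omega

lemma avoidsAll_one : AvoidsAll [1] := by
  have h : ([1] : List ℕ) = ssumL (idL 1) (idL 0) := by simp [ssumL, idL]
  rw [h]
  exact block_avoids 1 0

lemma avoidsAll_nil : AvoidsAll [] := by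
  have h : ([] : List ℕ) = ssumL (idL 0) (idL 0) := by simp [ssumL, idL]
  rw [h]
  exact block_avoids 0 0

/-! ### The converse direction -/

lemma converse_aux (L : List (List ℕ))
    (hL : ∀ b ∈ L, b = [1] ∨ ∃ r1 r2 : ℕ, 1 ≤ r1 ∧ 1 ≤ r2 ∧ b = ssumL (idL r1) (idL r2)) :
    AvoidsAll (L.foldl dsumL []) ∧
      ∀ v ∈ L.foldl dsumL [], 1 ≤ v ∧ v ≤ (L.foldl dsumL []).length := by
  induction L with
  | nil => exact ⟨avoidsAll_nil, by simp⟩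
  | cons b L ih =>
      obtain ⟨ihA, ihB⟩ := ih (fun c hc => hL c (by simp [hc]))
      have hb := hL b (by simp)
      have hbA : AvoidsAll b ∧ ∀ v ∈ b, 1 ≤ v ∧ v ≤ b.length := by
        rcases hb with rfl | ⟨r1, r2, h1, h2, rfl⟩
        · exact ⟨avoidsAll_one, by simp⟩
        · refine ⟨block_avoids r1 r2, fun v hv => ?_⟩
          have := block_mem hv
          rw [block_length]
          omega
      rw [foldl_dsum_cons]
      constructor
      · exact avoidsAll_dsum (fun v hv => (hbA.2 v hv).2) (fun v hv => (ihB v hv).1) hbA.1 ihA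
      · intro v hv
        rw [dsumL] at hv
        rcases List.mem_append.1 hv with h | h
        · have := hbA.2 v h
          simp [dsumL]
          omega
        · rw [List.mem_map] at h
          obtain ⟨w, hw, rfl⟩ := h
          have h1 := ihB w hw
          simp [dsumL]
          omega

/-! ### Auxiliary lemmas for the forward direction -/

lemma pair_sublist_of_mem {l : List ℕ} (h : l.Pairwise (· < ·)) {x y : ℕ}
    (hx : x ∈ l) (hy : y ∈ l) (hxy : x < y) : [x, y].Sublist l := by
  induction l with
  | nil => simp at hx
  | cons z l ih =>
      obtain ⟨hz, hl⟩ := List.pairwise_cons.1 h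
      rcases List.mem_cons.1 hx with rfl | hx'
      · have hy' : y ∈ l := by
          rcases List.mem_cons.1 hy with rfl | h' 
          · omega
          · exact h'
        exact List.cons_sublist_cons.2 (List.singleton_sublist.2 hy')
      · have hy' : y ∈ l := by
          rcases List.mem_cons.1 hy with rfl | h'
          · have := hz x hx'; omega
          · exact h'
        exact (ih hl hx' hy').cons z

lemma filter_split (p : ℕ → Bool) (l : List ℕ)
    (h : ∀ z w : ℕ, [z, w].Sublist l → p w = true → p z = true) :
    l = l.filter p ++ l.filter (fun x => !(p x)) := by
  induction l with
  | nil => simp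
  | cons x l ih =>
      by_cases hx : p x = true
      · rw [List.filter_cons_of_pos hx, List.filter_cons_of_neg (by simp [hx])]
        rw [List.cons_append]
        exact congrArg _ (ih (fun z w hzw hw => h z w (hzw.cons x) hw))
      · have hall : ∀ w ∈ l, ¬ p w = true := by
          intro w hw hc
          exact hx (h x w (List.cons_sublist_cons.2 (List.singleton_sublist.2 hw)) hc)
        rw [List.filter_cons_of_neg hx, List.filter_cons_of_pos (by simp [hx])]
        rw [List.filter_eq_nil_iff.2 hall, List.nil_append,
          List.filter_eq_self.2 (fun a ha => by simp [hall a ha])]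

lemma sorted_eq_of_perm {l₁ l₂ : List ℕ} (h : l₁.Perm l₂) (h1 : l₁.Pairwise (· < ·))
    (h2 : l₂.Pairwise (· < ·)) : l₁ = l₂ := by
  haveI : IsAntisymm ℕ (· < ·) := ⟨fun a b h h' => absurd (h.trans h') (lt_irrefl a)⟩
  exact List.Perm.eq_of_pairwise (fun a b _ _ hab hba => absurd (hab.trans hba) (lt_irrefl a)) h1 h2 h

lemma map_sub_range' (k s m : ℕ) : (List.range' (k + s) m).map (· - k) = List.range' s m := by
  rw [← List.map_add_range' (a := k) s m, List.map_map]
  rw [List.map_congr_left (g := id) (fun v _ => by simp [Function.comp])]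
  exact List.map_id _


/-! ### The forward direction -/

lemma forward : ∀ n : ℕ, ∀ π : List ℕ, π.Perm (List.range' 1 n) → AvoidsAll π →
    ∃ L : List (List ℕ),
      (∀ b ∈ L, b = [1] ∨ ∃ r1 r2 : ℕ, 1 ≤ r1 ∧ 1 ≤ r2 ∧ b = ssumL (idL r1) (idL r2)) ∧
      π = L.foldl dsumL [] := by
  intro n
  induction n using Nat.strong_induction_on with
  | _ n IH =>
  intro π hperm hav
  rcases Nat.eq_zero_or_pos n with rfl | hn
  · have hnil : π = [] := by simpa using hperm
    exact ⟨[], by simp, by simp [hnil]⟩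
  have h1π : 1 ∈ π := hperm.mem_iff.2 (List.mem_range'_1.2 ⟨le_rfl, by omega⟩)
  obtain ⟨P, R, hsplit⟩ := List.append_of_mem h1π
  subst hsplit
  have hmem : ∀ v, v ∈ P ++ 1 :: R ↔ 1 ≤ v ∧ v < 1 + n := fun v => by
    rw [hperm.mem_iff, List.mem_range'_1]
  have hnd : (P ++ 1 :: R).Nodup := hperm.nodup_iff.2 (List.nodup_range' (s := 1) (n := n))
  rw [List.nodup_append, List.nodup_cons] at hnd
  obtain ⟨hndP, ⟨h1R, hndR⟩, hdisj⟩ := hnd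
  have h1P : (1 : ℕ) ∉ P := fun h => hdisj _ h _ (by simp) rfl
  have hvP : ∀ v ∈ P, 2 ≤ v ∧ v ≤ n := by
    intro v hv
    have h1 := (hmem v).1 (List.mem_append_left _ hv)
    have h2 : v ≠ 1 := fun h => h1P (h ▸ hv)
    omega
  have hvR : ∀ v ∈ R, 2 ≤ v ∧ v ≤ n := by
    intro v hv
    have h1 := (hmem v).1 (List.mem_append_right _ (by simp [hv]))
    have h2 : v ≠ 1 := fun h => h1R (h ▸ hv)
    omega
  have h321 := hav.1
  have h2413 := hav.2.1
  have h3142 := hav.2.2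
  rw [AvoidsPat, contains321_iff] at h321
  rw [AvoidsPat, contains2413_iff] at h2413
  rw [AvoidsPat, contains3142_iff] at h3142
  have hPinc : P.Pairwise (· < ·) := by
    rw [List.pairwise_iff_forall_sublist]
    intro x y hxy
    by_contra hle
    have hne : x ≠ y := List.pairwise_iff_forall_sublist.1 hndP hxy
    have hy2 : 2 ≤ y := (hvP y (hxy.subset (by simp))).1
    exact h321 ⟨x, y, 1, hxy.append (by simp : [1].Sublist (1 :: R)), by omega, by omega⟩
  have hcomp : ∀ w ∈ R, ∀ v ∈ P, ∀ v' ∈ P, ¬(v' < w ∧ w < v) := by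
    rintro w hw v hv v' hv' ⟨hh1, hh2⟩
    have hsub : [v', v].Sublist P := pair_sublist_of_mem hPinc hv' hv (by omega)
    have hv'2 : 2 ≤ v' := (hvP v' hv').1
    exact h2413 ⟨v', v, 1, w,
      hsub.append (List.cons_sublist_cons.2 (List.singleton_sublist.2 hw)), by omega, hh1, hh2⟩
  rcases P with _ | ⟨a, P'⟩
  · -- first entry is 1
    have hR : R.Perm (List.range' 2 (n - 1)) := by
      rw [List.perm_ext_iff_of_nodup hndR (List.nodup_range')]
      intro v
      rw [List.mem_range'_1]
      constructor
      · intro hv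
        have := hvR v hv
        omega
      · intro hv
        have hvπ : v ∈ [] ++ 1 :: R := (hmem v).2 (by omega)
        simp only [List.nil_append, List.mem_cons] at hvπ
        rcases hvπ with rfl | h
        · omega
        · exact h
    have hρperm : (R.map (· - 1)).Perm (List.range' 1 (n - 1)) := by
      have h := hR.map (· - 1)
      have heq : (List.range' 2 (n - 1)).map (· - 1) = List.range' 1 (n - 1) := by
        have := map_sub_range' 1 1 (n - 1)
        norm_num at this
        exact this
      rwa [heq] at h
    have hρav : AvoidsAll (R.map (· - 1)) := by
      apply avoidsAll_map
      · intro x hx y hy h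
        have := hvR x hx
        have := hvR y hy
        omega
      · exact avoidsAll_sublist (by simp) hav
    obtain ⟨L', hLb, hLf⟩ := IH (n - 1) (by omega) _ hρperm hρav
    refine ⟨[1] :: L', ?_, ?_⟩
    · intro b hb
      rcases List.mem_cons.1 hb with rfl | h
      · exact Or.inl rfl
      · exact hLb b h
    · rw [foldl_dsum_cons, ← hLf, dsumL]
      have hTmap : (R.map (· - 1)).map (· + ([1] : List ℕ).length) = R := by
        rw [List.map_map]
        rw [List.map_congr_left (g := id) (fun v hv => by
          have := hvR v hv
          simp [Function.comp]
          omega)]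
        exact List.map_id _
      rw [hTmap]
      simp
  · -- first entry is a ≥ 2
    have ha2 : 2 ≤ a := (hvP a (by simp)).1
    have han : a ≤ n := (hvP a (by simp)).2
    have hdown : ∀ v ∈ a :: P', ∀ u, a ≤ u → u ≤ v → u ∈ a :: P' := by
      intro v hv u hau huv
      by_contra hu
      have hvn := (hvP v hv).2
      have huπ : u ∈ (a :: P') ++ 1 :: R := (hmem u).2 ⟨by omega, by omega⟩
      have huR : u ∈ R := by
        rcases List.mem_append.1 huπ with h | h
        · exact absurd h hu
        · rcases List.mem_cons.1 h with rfl | h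
          · omega
          · exact h
      have hau' : a < u := by
        rcases eq_or_lt_of_le hau with rfl | h
        · exact absurd (by simp) hu
        · exact h
      have huv' : u < v := lt_of_le_of_ne huv (fun h => hu (h ▸ hv))
      exact hcomp u huR v hv a (by simp) ⟨hau', huv'⟩
    have hPmem : ∀ v, v ∈ a :: P' ↔ a ≤ v ∧ v < a + (P'.length + 1) := by
      intro v
      constructor
      · intro hv
        have h1 : a ≤ v := by
          rcases List.mem_cons.1 hv with rfl | h
          · exact le_rfl
          · exact le_of_lt ((List.pairwise_cons.1 hPinc).1 v h)
        refine ⟨h1, ?_⟩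
        have hsub : List.range' a (v + 1 - a) ⊆ a :: P' := by
          intro u hu
          rw [List.mem_range'_1] at hu
          exact hdown v hv u (by omega) (by omega)
        have hle := (List.subperm_of_subset (List.nodup_range') hsub).length_le
        rw [List.length_range'] at hle
        have hlen : (a :: P').length = P'.length + 1 := rfl
        omega
      · rintro ⟨h1, h2⟩
        by_contra hv
        have hlt : ∀ u ∈ a :: P', u < v := by
          intro u hu
          by_contra hge
          exact hv (hdown u hu v h1 (by omega))
        have hsub : (a :: P') ⊆ List.range' a (v - a) := by
          intro u hu
          rw [List.mem_range'_1]
          have h3 := hlt u hu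
          have h4 : a ≤ u := by
            rcases List.mem_cons.1 hu with rfl | h
            · exact le_rfl
            · exact le_of_lt ((List.pairwise_cons.1 hPinc).1 u h)
          omega
        have hle := (List.subperm_of_subset hndP hsub).length_le
        rw [List.length_range'] at hle
        have hlen : (a :: P').length = P'.length + 1 := rfl
        omega
    have hPeq : a :: P' = List.range' a (P'.length + 1) := by
      apply sorted_eq_of_perm _ hPinc (List.pairwise_lt_range')
      rw [List.perm_ext_iff_of_nodup hndP (List.nodup_range')]
      intro v
      rw [List.mem_range'_1]
      exact hPmem v
    have htop : a + P'.length ∈ a :: P' := (hPmem _).2 ⟨by omega, by omega⟩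
    have htopn : a + P'.length ≤ n := (hvP _ htop).2
    have hsplitR : ∀ z w : ℕ, [z, w].Sublist R → w < a → z < a := by
      intro z w hzw hw
      by_contra hz
      push_neg at hz
      have hzR : z ∈ R := hzw.subset (by simp)
      have hwR : w ∈ R := hzw.subset (by simp)
      have hzP : z ∉ a :: P' := fun h => hdisj _ h _ (by simp [hzR]) rfl
      have hzbig : a + (P'.length + 1) ≤ z := by
        by_contra hc
        exact hzP ((hPmem z).2 ⟨by omega, by omega⟩)
      have hw2 : 2 ≤ w := (hvR w hwR).1
      apply h3142
      exact ⟨a + P'.length, 1, z, w,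
        (List.singleton_sublist.2 htop).append (List.cons_sublist_cons.2 hzw),
        by omega, by omega, by omega⟩
    have hRST : R = R.filter (fun v => decide (v < a)) ++
        R.filter (fun x => !(fun v => decide (v < a)) x) := by
      apply filter_split
      intro z w hzw hw
      simp only [decide_eq_true_eq] at hw ⊢
      exact hsplitR z w hzw hw
    set S := R.filter (fun v => decide (v < a)) with hSdef
    set T := R.filter (fun x => !(fun v => decide (v < a)) x) with hTdef
    have hSsub : S.Sublist R := List.filter_sublist
    have hTsub : T.Sublist R := List.filter_sublist
    have hSmem : ∀ v, v ∈ S ↔ 2 ≤ v ∧ v < a := by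
      intro v
      rw [hSdef, List.mem_filter]
      constructor
      · rintro ⟨hv, hd⟩
        simp only [decide_eq_true_eq] at hd
        exact ⟨(hvR v hv).1, hd⟩
      · rintro ⟨h2, hlta⟩
        have hπ : v ∈ (a :: P') ++ 1 :: R := (hmem v).2 ⟨by omega, by omega⟩
        have hvR' : v ∈ R := by
          rcases List.mem_append.1 hπ with h | h
          · exact absurd ((hPmem v).1 h).1 (by omega)
          · rcases List.mem_cons.1 h with rfl | h
            · omega
            · exact h
        exact ⟨hvR', by simp; omega⟩
    have hSnd : S.Nodup := List.Nodup.sublist hSsub hndR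
    have hSinc : S.Pairwise (· < ·) := by
      rw [List.pairwise_iff_forall_sublist]
      intro x y hxy
      by_contra hle
      have hne : x ≠ y := List.pairwise_iff_forall_sublist.1 hSnd hxy
      have hx' := (hSmem x).1 (hxy.subset (by simp))
      have hy' := (hSmem y).1 (hxy.subset (by simp))
      apply h321
      refine ⟨a, x, y, ?_, by omega, by omega⟩
      exact (List.singleton_sublist.2 (by simp)).append ((hxy.trans hSsub).cons 1)
    have hSeq : S = List.range' 2 (a - 2) := by
      apply sorted_eq_of_perm _ hSinc (List.pairwise_lt_range')
      rw [List.perm_ext_iff_of_nodup hSnd (List.nodup_range')]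
      intro v
      rw [List.mem_range'_1, hSmem]
      omega
    have hTmem : ∀ v, v ∈ T ↔ a + P'.length + 1 ≤ v ∧ v ≤ n := by
      intro v
      rw [hTdef, List.mem_filter]
      constructor
      · rintro ⟨hv, hd⟩
        simp only [Bool.not_eq_true', decide_eq_false_iff_not, not_lt] at hd
        have hvP' : v ∉ a :: P' := fun h => hdisj _ h _ (by simp [hv]) rfl
        have h3 : ¬(a ≤ v ∧ v < a + (P'.length + 1)) := fun h => hvP' ((hPmem v).2 h)
        have h4 := (hvR v hv).2
        omega
      · rintro ⟨h1, h2⟩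
        have hπ : v ∈ (a :: P') ++ 1 :: R := (hmem v).2 ⟨by omega, by omega⟩
        have hvR' : v ∈ R := by
          rcases List.mem_append.1 hπ with h | h
          · exfalso
            have := ((hPmem v).1 h).2
            omega
          · rcases List.mem_cons.1 h with rfl | h
            · omega
            · exact h
        refine ⟨hvR', by simp; omega⟩
    have hTnd : T.Nodup := List.Nodup.sublist hTsub hndR
    have hTperm : T.Perm (List.range' (a + P'.length + 1) (n - (a + P'.length))) := by
      rw [List.perm_ext_iff_of_nodup hTnd (List.nodup_range')]
      intro v
      rw [List.mem_range'_1, hTmem]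
      omega
    have hρperm : (T.map (· - (a + P'.length))).Perm
        (List.range' 1 (n - (a + P'.length))) := by
      have h := hTperm.map (· - (a + P'.length))
      rwa [map_sub_range' (a + P'.length) 1 (n - (a + P'.length))] at h
    have hρav : AvoidsAll (T.map (· - (a + P'.length))) := by
      apply avoidsAll_map
      · intro x hx y hy h
        have := (hTmem x).1 hx
        have := (hTmem y).1 hy
        omega
      · refine avoidsAll_sublist (hTsub.trans ?_) hav
        exact (List.sublist_cons_self 1 R).trans (List.sublist_append_right _ _)
    obtain ⟨L', hLb, hLf⟩ := IH (n - (a + P'.length)) (by omega) _ hρperm hρav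
    refine ⟨ssumL (idL (P'.length + 1)) (idL (a - 1)) :: L', ?_, ?_⟩
    · intro b hb
      rcases List.mem_cons.1 hb with rfl | h
      · exact Or.inr ⟨P'.length + 1, a - 1, by omega, by omega, rfl⟩
      · exact hLb b h
    · rw [foldl_dsum_cons, ← hLf, dsumL, block_length]
      have hTmap : (T.map (· - (a + P'.length))).map (· + (P'.length + 1 + (a - 1))) = T := by
        rw [List.map_map]
        rw [List.map_congr_left (g := id) (fun v hv => by
          have := (hTmem v).1 hv
          simp [Function.comp]
          omega)]
        exact List.map_id _
      rw [hTmap, block_eq]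
      have h1 : a - 1 + 1 = a := by omega
      have h2 : List.range' 1 (a - 1) = 1 :: S := by
        rw [hSeq]
        have h3 : a - 1 = (a - 2) + 1 := by omega
        rw [h3, List.range'_succ]
      rw [h1, ← hPeq, h2, List.append_assoc]
      rw [hRST]
      simp

/-- A permutation of `[n]` avoids 321, 2413 and 3142 iff it is a direct sum of
blocks each of which is the trivial permutation `1` or of the form
`id_{r1} ⊖ id_{r2}` with `r1, r2 ≥ 1`. -/
theorem avoids_iff_directSum_decomposition (n : ℕ) (π : List ℕ) (hπ : IsPermList n π) :
    AvoidsAll π ↔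
      ∃ L : List (List ℕ),
        (∀ b ∈ L, b = [1] ∨ ∃ r1 r2 : ℕ, 1 ≤ r1 ∧ 1 ≤ r2 ∧ b = ssumL (idL r1) (idL r2)) ∧
        π = L.foldl dsumL [] := by
  constructor
  · exact fun hav => forward n π hπ hav
  · rintro ⟨L, hL, rfl⟩
    exact (converse_aux L hL).1
end

section
/- Let a_n denote the number of permutations of [n] avoiding all of 321, 2413, and 3142. Then a_n satisfies a_n = 3a_{n-1} − 2a_{n-2} + a_{n-3} for n ≥ 4, with a_1 = 1, a_2 = 2, a_3 = 5. -/
namespace AvRec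
open List

def C321 (l : List ℕ) : Prop := ∃ a b c : ℕ, a < b ∧ b < c ∧ [c,b,a] <+ l
def C2413 (l : List ℕ) : Prop := ∃ a b c d : ℕ, a < b ∧ b < c ∧ c < d ∧ [b,d,a,c] <+ l
def C3142 (l : List ℕ) : Prop := ∃ a b c d : ℕ, a < b ∧ b < c ∧ c < d ∧ [c,a,d,b] <+ l

lemma len4 {u : List ℕ} (h : u.length = 4) : ∃ a b c d, u = [a,b,c,d] := by
  rcases u with _ | ⟨a, _ | ⟨b, _ | ⟨c, _ | ⟨d, _ | ⟨e, u⟩⟩⟩⟩⟩ <;> simp_all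

lemma contains321_iff (l : List ℕ) : ContainsPat l [3,2,1] ↔ C321 l := by
  constructor
  · rintro ⟨t, hsub, hlen, hrel⟩
    obtain ⟨x, y, z, rfl⟩ := List.length_eq_three.mp (by simpa using hlen)
    have h10 : y < x := by simpa using (hrel 1 0 (by simp) (by simp)).mpr (by simp)
    have h21 : z < y := by simpa using (hrel 2 1 (by simp) (by simp)).mpr (by simp)
    exact ⟨z, y, x, h21, h10, hsub⟩
  · rintro ⟨a, b, c, hab, hbc, hsub⟩
    refine ⟨[c,b,a], hsub, by simp, ?_⟩
    intro i j hi hj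
    simp only [List.length_cons, List.length_nil] at hi hj
    interval_cases i <;> interval_cases j <;> simp <;> omega

lemma contains2413_iff (l : List ℕ) : ContainsPat l [2,4,1,3] ↔ C2413 l := by
  constructor
  · rintro ⟨t, hsub, hlen, hrel⟩
    obtain ⟨w, x, y, z, rfl⟩ := len4 (by simpa using hlen)
    have h20 : y < w := by simpa using (hrel 2 0 (by simp) (by simp)).mpr (by simp)
    have h03 : w < z := by simpa using (hrel 0 3 (by simp) (by simp)).mpr (by simp)
    have h31 : z < x := by simpa using (hrel 3 1 (by simp) (by simp)).mpr (by simp)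
    exact ⟨y, w, z, x, h20, h03, h31, hsub⟩
  · rintro ⟨a, b, c, d, hab, hbc, hcd, hsub⟩
    refine ⟨[b,d,a,c], hsub, by simp, ?_⟩
    intro i j hi hj
    simp only [List.length_cons, List.length_nil] at hi hj
    interval_cases i <;> interval_cases j <;> simp <;> omega

lemma contains3142_iff (l : List ℕ) : ContainsPat l [3,1,4,2] ↔ C3142 l := by
  constructor
  · rintro ⟨t, hsub, hlen, hrel⟩
    obtain ⟨w, x, y, z, rfl⟩ := len4 (by simpa using hlen)
    have h13 : x < z := by simpa using (hrel 1 3 (by simp) (by simp)).mpr (by simp)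
    have h30 : z < w := by simpa using (hrel 3 0 (by simp) (by simp)).mpr (by simp)
    have h02 : w < y := by simpa using (hrel 0 2 (by simp) (by simp)).mpr (by simp)
    exact ⟨x, z, w, y, h13, h30, h02, hsub⟩
  · rintro ⟨a, b, c, d, hab, hbc, hcd, hsub⟩
    refine ⟨[c,a,d,b], hsub, by simp, ?_⟩
    intro i j hi hj
    simp only [List.length_cons, List.length_nil] at hi hj
    interval_cases i <;> interval_cases j <;> simp <;> omega

lemma avoidsAll_iff (l : List ℕ) : AvoidsAll l ↔ ¬ C321 l ∧ ¬ C2413 l ∧ ¬ C3142 l := by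
  unfold AvoidsAll AvoidsPat
  rw [contains321_iff, contains2413_iff, contains3142_iff]


/-! ### map transfer -/

lemma c321_map {m : ℕ} {l : List ℕ} : C321 (l.map (· + m)) ↔ C321 l := by
  constructor
  · rintro ⟨a, b, c, hab, hbc, hsub⟩
    rw [List.sublist_map_iff] at hsub
    obtain ⟨l', hl', heq⟩ := hsub
    have h3 : l'.length = 3 := by
      have := congrArg List.length heq; simpa using this.symm
    obtain ⟨x, y, z, rfl⟩ := List.length_eq_three.mp h3
    simp only [List.map_cons, List.map_nil, List.cons.injEq, and_true] at heq
    obtain ⟨hc, hb, ha⟩ := heq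
    exact ⟨z, y, x, by omega, by omega, hl'⟩
  · rintro ⟨a, b, c, hab, hbc, hsub⟩
    exact ⟨a+m, b+m, c+m, by omega, by omega, by simpa using hsub.map (· + m)⟩

lemma c2413_map {m : ℕ} {l : List ℕ} : C2413 (l.map (· + m)) ↔ C2413 l := by
  constructor
  · rintro ⟨a, b, c, d, hab, hbc, hcd, hsub⟩
    rw [List.sublist_map_iff] at hsub
    obtain ⟨l', hl', heq⟩ := hsub
    have h4 : l'.length = 4 := by
      have := congrArg List.length heq; simpa using this.symm
    obtain ⟨w, x, y, z, rfl⟩ := len4 h4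
    simp only [List.map_cons, List.map_nil, List.cons.injEq, and_true] at heq
    obtain ⟨hb, hd, ha, hc⟩ := heq
    exact ⟨y, w, z, x, by omega, by omega, by omega, hl'⟩
  · rintro ⟨a, b, c, d, hab, hbc, hcd, hsub⟩
    exact ⟨a+m, b+m, c+m, d+m, by omega, by omega, by omega,
      by simpa using hsub.map (· + m)⟩

lemma c3142_map {m : ℕ} {l : List ℕ} : C3142 (l.map (· + m)) ↔ C3142 l := by
  constructor
  · rintro ⟨a, b, c, d, hab, hbc, hcd, hsub⟩
    rw [List.sublist_map_iff] at hsub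
    obtain ⟨l', hl', heq⟩ := hsub
    have h4 : l'.length = 4 := by
      have := congrArg List.length heq; simpa using this.symm
    obtain ⟨w, x, y, z, rfl⟩ := len4 h4
    simp only [List.map_cons, List.map_nil, List.cons.injEq, and_true] at heq
    obtain ⟨hc, ha, hd, hb⟩ := heq
    exact ⟨x, z, w, y, by omega, by omega, by omega, hl'⟩
  · rintro ⟨a, b, c, d, hab, hbc, hcd, hsub⟩
    exact ⟨a+m, b+m, c+m, d+m, by omega, by omega, by omega,
      by simpa using hsub.map (· + m)⟩

lemma avoidsAll_map {m : ℕ} {l : List ℕ} : AvoidsAll (l.map (· + m)) ↔ AvoidsAll l := by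
  rw [avoidsAll_iff, avoidsAll_iff, c321_map, c2413_map, c3142_map]

lemma avoidsAll_sublist {l l' : List ℕ} (h : l <+ l') (h' : AvoidsAll l') : AvoidsAll l := by
  rw [avoidsAll_iff] at h' ⊢
  obtain ⟨h1, h2, h3⟩ := h'
  refine ⟨fun ⟨a,b,c,hab,hbc,hs⟩ => h1 ⟨a,b,c,hab,hbc,hs.trans h⟩,
    fun ⟨a,b,c,d,hab,hbc,hcd,hs⟩ => h2 ⟨a,b,c,d,hab,hbc,hcd,hs.trans h⟩,
    fun ⟨a,b,c,d,hab,hbt,hcd,hs⟩ => h3 ⟨a,b,c,d,hab,hbt,hcd,hs.trans h⟩⟩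

/-! ### blocks and glue -/

def blockL (r s : ℕ) : List ℕ := List.range' (s+1) r ++ List.range' 1 s
def glue (r s : ℕ) (ρ : List ℕ) : List ℕ := blockL r s ++ ρ.map (· + (r+s))

lemma mem_blockL {r s v : ℕ} : v ∈ blockL r s ↔ 1 ≤ v ∧ v ≤ r + s := by
  simp only [blockL, List.mem_append, List.mem_range'_1]
  omega

lemma shift_unshift {m : ℕ} {l : List ℕ} (h : ∀ v ∈ l, m + 1 ≤ v) :
    (l.map (· - m)).map (· + m) = l := by
  rw [List.map_map]
  conv_rhs => rw [← List.map_id l]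
  exact List.map_congr_left fun v hv => by have := h v hv; simp; omega

lemma map_add_range'' (m s k : ℕ) : (List.range' s k).map (· + m) = List.range' (s + m) k := by
  rw [show ((· + m) : ℕ → ℕ) = (fun x => m + x) from funext fun x => Nat.add_comm _ _,
    List.map_add_range']
  rw [Nat.add_comm m s]

lemma unshift_perm {m k : ℕ} {l : List ℕ} (h : l.Perm (List.range' (m+1) k)) :
    (l.map (· - m)).Perm (List.range' 1 k) := by
  have h2 := h.map (· - m)
  have : (List.range' (m+1) k).map (· - m) = List.range' 1 k := by
    have e : (List.range' 1 k).map (· + m) = List.range' (m+1) k := by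
      rw [map_add_range'' m 1 k, Nat.add_comm 1 m]
    rw [← e, List.map_map]
    conv_rhs => rw [← List.map_id (List.range' 1 k)]
    exact List.map_congr_left fun v hv => by simp
  rwa [this] at h2

lemma glue_perm {r s k : ℕ} {ρ : List ℕ} (hρ : ρ.Perm (List.range' 1 k)) :
    (glue r s ρ).Perm (List.range' 1 (r+s+k)) := by
  have h1 : ρ.map (· + (r+s)) ~ List.range' (r+s+1) k := by
    have := hρ.map (· + (r+s))
    rwa [map_add_range'' (r+s) 1 k, Nat.add_comm 1 (r+s)] at this
  have e1 : List.range' 1 s ++ List.range' (s+1) r = List.range' 1 (r+s) := by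
    have := List.range'_append (s := 1) (m := s) (n := r) (step := 1)
    simpa [Nat.add_comm 1 s, Nat.add_comm s r] using this
  have e2 : List.range' 1 (r+s) ++ List.range' (r+s+1) k = List.range' 1 (r+s+k) := by
    have := List.range'_append (s := 1) (m := r+s) (n := k) (step := 1)
    simpa [Nat.add_comm 1 (r+s), Nat.add_comm k (r+s)] using this
  calc glue r s ρ = (List.range' (s+1) r ++ List.range' 1 s) ++ ρ.map (· + (r+s)) := rfl
    _ ~ (List.range' 1 s ++ List.range' (s+1) r) ++ List.range' (r+s+1) k :=
        List.Perm.append List.perm_append_comm h1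
    _ = List.range' 1 (r+s) ++ List.range' (r+s+1) k := by rw [e1]
    _ = List.range' 1 (r+s+k) := e2


lemma pair_blockL {u v r s : ℕ} (h : [u,v] <+ blockL r s) :
    (s+1 ≤ u ∧ u < s+1+r ∧ s+1 ≤ v ∧ v < s+1+r ∧ u < v) ∨
    (1 ≤ u ∧ u ≤ s ∧ 1 ≤ v ∧ v ≤ s ∧ u < v) ∨
    (s+1 ≤ u ∧ u < s+1+r ∧ 1 ≤ v ∧ v ≤ s) := by
  rw [blockL, List.sublist_append_iff] at h
  obtain ⟨l₁, l₂, heq, h₁, h₂⟩ := h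
  have pw1 := List.pairwise_lt_range' (s := s+1) (n := r) 1
  have pw2 := List.pairwise_lt_range' (s := 1) (n := s) 1
  rcases l₁ with _ | ⟨x, _ | ⟨y, _ | ⟨z, l₁⟩⟩⟩
  · simp only [List.nil_append] at heq
    subst heq
    have hu : u ∈ List.range' 1 s := h₂.subset (by simp)
    have hv : v ∈ List.range' 1 s := h₂.subset (by simp)
    have huv : u < v := List.pairwise_iff_forall_sublist.mp pw2 h₂
    rw [List.mem_range'_1] at hu hv
    right; left; omega
  · simp only [List.cons_append, List.cons.injEq, List.nil_append] at heq
    obtain ⟨rfl, heq2⟩ := heq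
    rw [← heq2] at h₂
    have hu : u ∈ List.range' (s+1) r := h₁.subset (by simp)
    have hv : v ∈ List.range' 1 s := h₂.subset (by simp)
    rw [List.mem_range'_1] at hu hv
    right; right; omega
  · simp only [List.cons_append, List.cons.injEq] at heq
    obtain ⟨rfl, rfl, heq2⟩ := heq
    have hu : u ∈ List.range' (s+1) r := h₁.subset (by simp)
    have hv : v ∈ List.range' (s+1) r := h₁.subset (by simp)
    have huv : u < v := List.pairwise_iff_forall_sublist.mp pw1 h₁
    rw [List.mem_range'_1] at hu hv
    left; omega
  · exfalso
    have := congrArg List.length heq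
    simp at this

lemma sub12_3 (a b c : ℕ) : [a,b] <+ [a,b,c] := .cons₂ _ (.cons₂ _ (List.nil_sublist _))
lemma sub13_3 (a b c : ℕ) : [a,c] <+ [a,b,c] := .cons₂ _ (.cons _ (.cons₂ _ (List.nil_sublist _)))
lemma sub23_3 (a b c : ℕ) : [b,c] <+ [a,b,c] := .cons _ (.cons₂ _ (.cons₂ _ (List.nil_sublist _)))
lemma sub12_4 (a b c d : ℕ) : [a,b] <+ [a,b,c,d] := .cons₂ _ (.cons₂ _ (List.nil_sublist _))
lemma sub13_4 (a b c d : ℕ) : [a,c] <+ [a,b,c,d] := .cons₂ _ (.cons _ (.cons₂ _ (List.nil_sublist _)))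
lemma sub14_4 (a b c d : ℕ) : [a,d] <+ [a,b,c,d] := .cons₂ _ (.cons _ (.cons _ (.cons₂ _ (List.nil_sublist _))))
lemma sub23_4 (a b c d : ℕ) : [b,c] <+ [a,b,c,d] := .cons _ (.cons₂ _ (.cons₂ _ (List.nil_sublist _)))
lemma sub24_4 (a b c d : ℕ) : [b,d] <+ [a,b,c,d] := .cons _ (.cons₂ _ (.cons _ (.cons₂ _ (List.nil_sublist _))))
lemma sub34_4 (a b c d : ℕ) : [c,d] <+ [a,b,c,d] := .cons _ (.cons _ (.cons₂ _ (.cons₂ _ (List.nil_sublist _))))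

lemma not_c321_blockL (r s : ℕ) : ¬ C321 (blockL r s) := by
  rintro ⟨a, b, c, hab, hbc, hsub⟩
  have p1 := pair_blockL ((sub12_3 c b a).trans hsub)
  have p2 := pair_blockL ((sub23_3 c b a).trans hsub)
  omega

lemma not_c2413_blockL (r s : ℕ) : ¬ C2413 (blockL r s) := by
  rintro ⟨a, b, c, d, hab, hbc, hcd, hsub⟩
  -- tuple [b,d,a,c]
  have p1 := pair_blockL ((sub24_4 b d a c).trans hsub) -- (d,c)
  have p2 := pair_blockL ((sub13_4 b d a c).trans hsub) -- (b,a)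
  have p3 := pair_blockL ((sub14_4 b d a c).trans hsub) -- (b,c)
  have p4 := pair_blockL ((sub23_4 b d a c).trans hsub) -- (d,a)
  omega

lemma not_c3142_blockL (r s : ℕ) : ¬ C3142 (blockL r s) := by
  rintro ⟨a, b, c, d, hab, hbc, hcd, hsub⟩
  -- tuple [c,a,d,b]
  have p1 := pair_blockL ((sub12_4 c a d b).trans hsub) -- (c,a)
  have p2 := pair_blockL ((sub23_4 c a d b).trans hsub) -- (a,d)
  have p3 := pair_blockL ((sub34_4 c a d b).trans hsub) -- (d,b)
  have p4 := pair_blockL ((sub14_4 c a d b).trans hsub) -- (c,b)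
  omega

lemma mem_shift {v m k : ℕ} {ρ : List ℕ} (hρ : ρ.Perm (List.range' 1 k))
    (h : v ∈ ρ.map (· + m)) : m + 1 ≤ v := by
  obtain ⟨u, hu, rfl⟩ := List.mem_map.mp h
  have := hρ.subset hu
  rw [List.mem_range'_1] at this
  omega

lemma avoidsAll_glue {r s k : ℕ} {ρ : List ℕ} (hρp : ρ.Perm (List.range' 1 k))
    (hρ : AvoidsAll ρ) : AvoidsAll (glue r s ρ) := by
  rw [avoidsAll_iff] at hρ ⊢
  obtain ⟨n1, n2, n3⟩ := hρ
  have hB : ∀ v : ℕ, v ∈ blockL r s → v ≤ r + s := fun v hv => (mem_blockL.mp hv).2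
  refine ⟨?_, ?_, ?_⟩
  · rintro ⟨a, b, c, hab, hbc, hsub⟩
    rw [glue, List.sublist_append_iff] at hsub
    obtain ⟨l₁, l₂, heq, h₁, h₂⟩ := hsub
    rcases l₁ with _ | ⟨x, _ | ⟨y, _ | ⟨z, _ | ⟨w, l₁⟩⟩⟩⟩
    · simp only [List.nil_append] at heq; subst heq
      exact n1 (c321_map.mp ⟨a, b, c, hab, hbc, h₂⟩)
    · simp only [List.cons_append, List.cons.injEq, List.nil_append] at heq
      obtain ⟨rfl, heq2⟩ := heq
      rw [← heq2] at h₂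
      have h1 : c ≤ r + s := hB c (h₁.subset (by simp))
      have h2 : r + s + 1 ≤ b := mem_shift hρp (h₂.subset (by simp))
      omega
    · simp only [List.cons_append, List.cons.injEq, List.nil_append] at heq
      obtain ⟨rfl, rfl, heq2⟩ := heq
      rw [← heq2] at h₂
      have h1 : b ≤ r + s := hB b (h₁.subset (by simp))
      have h2 : r + s + 1 ≤ a := mem_shift hρp (h₂.subset (by simp))
      omega
    · simp only [List.cons_append, List.cons.injEq, List.nil_append] at heq
      obtain ⟨rfl, rfl, rfl, heq2⟩ := heq
      exact not_c321_blockL r s ⟨a, b, c, hab, hbc, h₁⟩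
    · exfalso; have := congrArg List.length heq; simp at this
  · rintro ⟨a, b, c, d, hab, hbc, hcd, hsub⟩
    rw [glue, List.sublist_append_iff] at hsub
    obtain ⟨l₁, l₂, heq, h₁, h₂⟩ := hsub
    rcases l₁ with _ | ⟨x, _ | ⟨y, _ | ⟨z, _ | ⟨w, _ | ⟨w', l₁⟩⟩⟩⟩⟩
    · simp only [List.nil_append] at heq; subst heq
      exact n2 (c2413_map.mp ⟨a, b, c, d, hab, hbc, hcd, h₂⟩)
    · -- [b] | [d,a,c] : a in right, b left : b ≤ r+s < a but a < b
      simp only [List.cons_append, List.cons.injEq, List.nil_append] at heq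
      obtain ⟨rfl, heq2⟩ := heq
      rw [← heq2] at h₂
      have h1 : b ≤ r + s := hB b (h₁.subset (by simp))
      have h2 : r + s + 1 ≤ a := mem_shift hρp (h₂.subset (by simp))
      omega
    · -- [b,d] | [a,c]
      simp only [List.cons_append, List.cons.injEq, List.nil_append] at heq
      obtain ⟨rfl, rfl, heq2⟩ := heq
      rw [← heq2] at h₂
      have h1 : b ≤ r + s := hB b (h₁.subset (by simp))
      have h2 : r + s + 1 ≤ a := mem_shift hρp (h₂.subset (by simp))
      omega
    · -- [b,d,a] | [c] : d left, c right: c > r+s ≥ d but c < d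
      simp only [List.cons_append, List.cons.injEq, List.nil_append] at heq
      obtain ⟨rfl, rfl, rfl, heq2⟩ := heq
      rw [← heq2] at h₂
      have h1 : d ≤ r + s := hB d (h₁.subset (by simp))
      have h2 : r + s + 1 ≤ c := mem_shift hρp (h₂.subset (by simp))
      omega
    · simp only [List.cons_append, List.cons.injEq, List.nil_append] at heq
      obtain ⟨rfl, rfl, rfl, rfl, heq2⟩ := heq
      exact not_c2413_blockL r s ⟨a, b, c, d, hab, hbc, hcd, h₁⟩
    · exfalso; have := congrArg List.length heq; simp at this
  · rintro ⟨a, b, c, d, hab, hbc, hcd, hsub⟩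
    rw [glue, List.sublist_append_iff] at hsub
    obtain ⟨l₁, l₂, heq, h₁, h₂⟩ := hsub
    rcases l₁ with _ | ⟨x, _ | ⟨y, _ | ⟨z, _ | ⟨w, _ | ⟨w', l₁⟩⟩⟩⟩⟩
    · simp only [List.nil_append] at heq; subst heq
      exact n3 (c3142_map.mp ⟨a, b, c, d, hab, hbc, hcd, h₂⟩)
    · -- [c] | [a,d,b] : a right, c left
      simp only [List.cons_append, List.cons.injEq, List.nil_append] at heq
      obtain ⟨rfl, heq2⟩ := heq
      rw [← heq2] at h₂
      have h1 : c ≤ r + s := hB c (h₁.subset (by simp))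
      have h2 : r + s + 1 ≤ a := mem_shift hρp (h₂.subset (by simp))
      omega
    · -- [c,a] | [d,b]: b right, c left: b > r+s ≥ c but b < c
      simp only [List.cons_append, List.cons.injEq, List.nil_append] at heq
      obtain ⟨rfl, rfl, heq2⟩ := heq
      rw [← heq2] at h₂
      have h1 : c ≤ r + s := hB c (h₁.subset (by simp))
      have h2 : r + s + 1 ≤ b := mem_shift hρp (h₂.subset (by simp))
      omega
    · -- [c,a,d] | [b]: d left, b right: b > r+s ≥ d but b < d
      simp only [List.cons_append, List.cons.injEq, List.nil_append] at heq
      obtain ⟨rfl, rfl, rfl, heq2⟩ := heq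
      rw [← heq2] at h₂
      have h1 : d ≤ r + s := hB d (h₁.subset (by simp))
      have h2 : r + s + 1 ≤ b := mem_shift hρp (h₂.subset (by simp))
      omega
    · simp only [List.cons_append, List.cons.injEq, List.nil_append] at heq
      obtain ⟨rfl, rfl, rfl, rfl, heq2⟩ := heq
      exact not_c3142_blockL r s ⟨a, b, c, d, hab, hbc, hcd, h₁⟩
    · exfalso; have := congrArg List.length heq; simp at this


lemma range'_one_eq {s : ℕ} (h : 1 ≤ s) : List.range' 1 s = 1 :: List.range' 2 (s-1) := by
  have hs' : s - 1 + 1 = s := by omega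
  conv_lhs => rw [← hs']
  rw [List.range'_succ]

lemma decomp {n : ℕ} {π : List ℕ} (hπ : π.Perm (List.range' 1 (n+1))) (hav : AvoidsAll π) :
    ∃ r s k ρ, 1 ≤ s ∧ (r = 0 → s = 1) ∧ r + s + k = n + 1 ∧
      ρ.Perm (List.range' 1 k) ∧ AvoidsAll ρ ∧ π = glue r s ρ := by
  obtain ⟨n1, n2, n3⟩ := (avoidsAll_iff π).mp hav
  have hmem : ∀ v, v ∈ π ↔ 1 ≤ v ∧ v ≤ n + 1 := fun v => by
    rw [hπ.mem_iff, List.mem_range'_1]; omega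
  have hnd : π.Nodup := hπ.nodup_iff.mpr (List.nodup_range' (s := 1) (n := n+1))
  have h1 : (1:ℕ) ∈ π := (hmem 1).mpr (by omega)
  obtain ⟨A, C, rfl⟩ := List.append_of_mem h1
  rw [List.nodup_append] at hnd
  obtain ⟨hndA, hnd1C, hdisj⟩ := hnd
  rw [List.nodup_cons] at hnd1C
  obtain ⟨h1C, hndC⟩ := hnd1C
  have h1A : (1:ℕ) ∉ A := fun h => hdisj _ h 1 (by simp) rfl
  have hCsub : C <+ A ++ 1 :: C :=
    (List.sublist_cons_self 1 C).trans (List.sublist_append_right A _)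
  have hACdisj : ∀ v, v ∈ A → v ∈ C → False := fun v hvA hvC => hdisj v hvA v (by simp [hvC]) rfl
  have hne : ∀ u v, [u,v] <+ A ++ 1 :: C → u ≠ v := by
    intro u v h
    have hndπ : (A ++ 1 :: C).Nodup := by
      rw [List.nodup_append, List.nodup_cons]
      exact ⟨hndA, ⟨h1C, hndC⟩, hdisj⟩
    exact List.pairwise_iff_forall_sublist.mp hndπ h
  have hmemA : ∀ v ∈ A, 2 ≤ v ∧ v ≤ n+1 := by
    intro v hv
    have h2 := (hmem v).mp (by simp [hv])
    have : v ≠ 1 := fun h => h1A (h ▸ hv)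
    exact ⟨by omega, h2.2⟩
  have hmemC : ∀ v ∈ C, 2 ≤ v ∧ v ≤ n+1 := by
    intro v hv
    have h2 := (hmem v).mp (by simp [hv])
    have : v ≠ 1 := fun h => h1C (h ▸ hv)
    exact ⟨by omega, h2.2⟩
  have hApw : List.Pairwise (· < ·) A := by
    rw [List.pairwise_iff_forall_sublist]
    intro u v huv
    by_contra hlt
    have hne' : u ≠ v := hne u v (huv.trans (List.sublist_append_left A (1 :: C)))
    have hvu : v < u := by omega
    have hsub : [u,v,1] <+ A ++ 1 :: C := by
      have t2 : [1] <+ 1 :: C := .cons₂ _ (List.nil_sublist _)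
      simpa using huv.append t2
    have hv1 : 2 ≤ v := (hmemA v (huv.subset (by simp))).1
    exact n1 ⟨1, v, u, by omega, hvu, hsub⟩
  rcases A with _ | ⟨x, A'⟩
  · -- first element is 1
    refine ⟨0, 1, n, C.map (· - 1), le_refl 1, fun _ => rfl, by omega, ?_, ?_, ?_⟩
    · have hC : C ~ List.range' 2 n := by
        have h' : (1 :: C) ~ 1 :: List.range' 2 n := by
          simpa [List.range'_succ] using hπ
        exact h'.cons_inv
      exact unshift_perm (m := 1) hC
    · have havC : AvoidsAll C := avoidsAll_sublist hCsub hav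
      rw [← avoidsAll_map (m := 1), shift_unshift (fun v hv => (hmemC v hv).1)]
      exact havC
    · show ([] ++ 1 :: C) = glue 0 1 (C.map (· - 1))
      rw [glue]
      have hb : blockL 0 1 = [1] := rfl
      rw [hb, show (0+1) = 1 from rfl, shift_unshift (fun v hv => (hmemC v hv).1)]
      rfl
  · -- first element x = s+1 ≥ 2
    have hx2 : 2 ≤ x := (hmemA x (by simp)).1
    obtain ⟨s, hs1, rfl⟩ : ∃ s, 1 ≤ s ∧ x = s + 1 := ⟨x - 1, by omega, by omega⟩
    have hF2 : ∀ v ∈ (s+1) :: A', s+1 ≤ v := by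
      intro v hv
      rcases List.mem_cons.mp hv with rfl | hv'
      · exact le_refl _
      · exact le_of_lt (List.pairwise_iff_forall_sublist.mp hApw
          (.cons₂ _ (List.singleton_sublist.mpr hv')))
    have hF3 : ∀ v w, v ∈ C → w ∈ (s+1) :: A' → s+1 < v → v < w → False := by
      intro v w hvC hwA hxv hvw
      have hwA' : w ∈ A' := by
        rcases List.mem_cons.mp hwA with rfl | h
        · omega
        · exact h
      have hsub : [s+1,w,1,v] <+ ((s+1) :: A') ++ 1 :: C := by
        have t1 : [s+1,w] <+ (s+1) :: A' := .cons₂ _ (List.singleton_sublist.mpr hwA')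
        have t2 : [1,v] <+ 1 :: C := .cons₂ _ (List.singleton_sublist.mpr hvC)
        simpa using t1.append t2
      exact n2 ⟨1, s+1, v, w, by omega, hxv, hvw, hsub⟩
    have hF4 : ∀ v ∈ (s+1) :: A', v < (s+1) + ((s+1)::A').length := by
      intro v hv
      by_contra hge
      push_neg at hge
      have hsubint : ∀ u ∈ List.range' (s+1) (v + 1 - (s+1)), u ∈ (s+1) :: A' := by
        intro u hu
        rw [List.mem_range'_1] at hu
        have huπ : u ∈ ((s+1)::A') ++ 1 :: C :=
          (hmem u).mpr ⟨by omega, le_trans (by omega) (hmemA v hv).2⟩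
        rcases List.mem_append.mp huπ with h | h
        · exact h
        · exfalso
          rcases List.mem_cons.mp h with h1' | hC2
          · omega
          · have hux : s+1 < u := by
              rcases Nat.eq_or_lt_of_le hu.1 with he | hlt
              · exact absurd hC2 (fun hc => hACdisj (s+1) (by simp) (he ▸ hc))
              · exact hlt
            have huv : u < v := by
              have hune : u ≠ v := fun he => hACdisj v hv (he ▸ hC2)
              omega
            exact hF3 u v hC2 hv hux huv
      have hsp : List.range' (s+1) (v+1-(s+1)) <+~ (s+1) :: A' :=
        (List.nodup_range' (s := s+1) (n := v+1-(s+1))).subperm hsubint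
      have hlen := hsp.length_le
      rw [List.length_range'] at hlen
      simp only [List.length_cons] at hge hlen
      omega
    obtain ⟨r, hr1, hrdef⟩ : ∃ r, 1 ≤ r ∧ r = ((s+1)::A').length :=
      ⟨A'.length + 1, by omega, rfl⟩
    have hAperm : ((s+1) :: A') ~ List.range' (s+1) r := by
      have hsub2 : ∀ v ∈ (s+1) :: A', v ∈ List.range' (s+1) r := fun v hv =>
        List.mem_range'_1.mpr ⟨hF2 v hv, by have := hF4 v hv; omega⟩
      have hsp : ((s+1) :: A') <+~ List.range' (s+1) r := hndA.subperm hsub2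
      exact hsp.perm_of_length_le (by rw [List.length_range', hrdef])
    have hAeq : ((s+1) :: A') = List.range' (s+1) r :=
      List.Perm.eq_of_pairwise (le := (· < ·)) (fun a b _ _ h1 h2 => absurd (lt_trans h1 h2) (lt_irrefl a)) hApw (List.pairwise_lt_range' 1) hAperm
    have hsr_le : s + r ≤ n + 1 := by
      have hmm : s + r ∈ List.range' (s+1) r := List.mem_range'_1.mpr (by omega)
      rw [← hAeq] at hmm
      exact (hmemA _ hmm).2
    have hmemA' : ∀ v, v ∈ (s+1) :: A' ↔ s+1 ≤ v ∧ v < s+1+r := by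
      intro v
      rw [hAeq, List.mem_range'_1]
    -- split C
    have hLD := List.takeWhile_append_dropWhile (p := fun v => decide (v ≤ s)) (l := C)
    set L := C.takeWhile (fun v => decide (v ≤ s)) with hLdef
    set D := C.dropWhile (fun v => decide (v ≤ s)) with hDdef
    have hLle : ∀ v ∈ L, v ≤ s := fun v hv => by simpa using List.mem_takeWhile_imp hv
    have hLsubC : L <+ C := List.takeWhile_sublist _
    have hDsubC : D <+ C := List.dropWhile_sublist _
    have hF5 : ∀ u v, [u,v] <+ C → s + r + 1 ≤ u → v ≤ s → False := by
      intro u v huv hu hv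
      have hvC : v ∈ C := huv.subset (by simp)
      have hv2 : 2 ≤ v := (hmemC v hvC).1
      have hsub : [s+1,1,u,v] <+ ((s+1) :: A') ++ 1 :: C := by
        have t1 : [s+1] <+ (s+1) :: A' := .cons₂ _ (List.nil_sublist _)
        have t2 : [1,u,v] <+ 1 :: C := .cons₂ _ huv
        simpa using t1.append t2
      exact n3 ⟨1, v, s+1, u, by omega, by omega, by omega, hsub⟩
    have hF6 : ∀ u v, [u,v] <+ C → v < u → u ≤ s → False := by
      intro u v huv hvu hu
      have hsub : [s+1,u,v] <+ ((s+1) :: A') ++ 1 :: C := by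
        have t1 : [s+1] <+ (s+1) :: A' := .cons₂ _ (List.nil_sublist _)
        have t2 : [u,v] <+ 1 :: C := .cons _ huv
        simpa using t1.append t2
      exact n1 ⟨v, u, s+1, hvu, by omega, hsub⟩
    have hnotmemA : ∀ v, v ∈ C → ¬ (s+1 ≤ v ∧ v < s+1+r) := by
      intro v hvC hb
      exact hACdisj v ((hmemA' v).mpr hb) hvC
    have hDge : ∀ v ∈ D, s + r + 1 ≤ v := by
      intro v hv
      have hvC : v ∈ C := hDsubC.subset hv
      by_cases hvs : v ≤ s
      · exfalso
        have hDne : D ≠ [] := List.ne_nil_of_mem hv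
        have hd0s : ¬ ((D.head hDne) ≤ s) := by
          have := List.head_dropWhile_not (fun v => decide (v ≤ s)) (l := C) (hDdef ▸ hDne)
          simp only [decide_eq_false_iff_not] at this
          simpa using this
        have hd0C : (D.head hDne) ∈ C := hDsubC.subset (List.head_mem hDne)
        have hd0ge : s + r + 1 ≤ D.head hDne := by
          have := hnotmemA _ hd0C; omega
        have hvne : v ≠ D.head hDne := by omega
        have hvtail : v ∈ D.tail := by
          have := List.cons_head_tail (l := D) hDne
          rw [← this] at hv
          rcases List.mem_cons.mp hv with h | h
          · exact absurd h hvne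
          · exact h
        have hpair : [D.head hDne, v] <+ D := by
          conv_rhs => rw [← List.cons_head_tail (l := D) hDne]
          exact .cons₂ _ (List.singleton_sublist.mpr hvtail)
        exact hF5 _ v (hpair.trans hDsubC) hd0ge hvs
      · have := hnotmemA v hvC; omega
    have hLmem : ∀ v, v ∈ L ↔ 2 ≤ v ∧ v ≤ s := by
      intro v
      constructor
      · intro hv
        exact ⟨(hmemC v (hLsubC.subset hv)).1, hLle v hv⟩
      · rintro ⟨h2, hvs⟩
        have hvπ : v ∈ ((s+1)::A') ++ 1 :: C := (hmem v).mpr ⟨by omega, by omega⟩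
        rcases List.mem_append.mp hvπ with h | h
        · exfalso
          have := (hmemA' v).mp h
          omega
        · rcases List.mem_cons.mp h with h1' | hC2
          · omega
          · rw [← hLD] at hC2
            rcases List.mem_append.mp hC2 with h | h
            · exact h
            · exfalso; have := hDge v h; omega
    have hLpw : List.Pairwise (· < ·) L := by
      rw [List.pairwise_iff_forall_sublist]
      intro u v huv
      by_contra hlt
      have hne' : u ≠ v := hne u v ((huv.trans hLsubC).trans hCsub)
      exact hF6 u v (huv.trans hLsubC) (by omega) (hLle u (huv.subset (by simp)))
    have hLnd : L.Nodup := List.Nodup.sublist hLsubC hndC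
    have hLeq : L = List.range' 2 (s - 1) := by
      apply List.Perm.eq_of_pairwise (le := (· < ·)) (fun a b _ _ h1 h2 => absurd (lt_trans h1 h2) (lt_irrefl a)) hLpw (List.pairwise_lt_range' 1) ?_
      rw [List.perm_ext_iff_of_nodup hLnd (List.nodup_range' 1)]
      intro v
      rw [hLmem, List.mem_range'_1]
      omega
    have hDmem : ∀ v, v ∈ D ↔ s + r + 1 ≤ v ∧ v ≤ n + 1 := by
      intro v
      constructor
      · intro hv
        exact ⟨hDge v hv, (hmemC v (hDsubC.subset hv)).2⟩
      · rintro ⟨hge, hle⟩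
        have hvπ : v ∈ ((s+1)::A') ++ 1 :: C := (hmem v).mpr ⟨by omega, hle⟩
        rcases List.mem_append.mp hvπ with h | h
        · exfalso
          have := (hmemA' v).mp h
          omega
        · rcases List.mem_cons.mp h with h1' | hC2
          · omega
          · rw [← hLD] at hC2
            rcases List.mem_append.mp hC2 with h | h
            · exfalso; have := hLle v h; omega
            · exact h
    have hDnd : D.Nodup := List.Nodup.sublist hDsubC hndC
    have hDperm : D ~ List.range' (s+r+1) (n+1-(s+r)) := by
      rw [List.perm_ext_iff_of_nodup hDnd (List.nodup_range' 1)]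
      intro v
      rw [hDmem, List.mem_range'_1]
      omega
    have hDge' : ∀ v ∈ D, (r+s) + 1 ≤ v := fun v hv => by have := hDge v hv; omega
    refine ⟨r, s, n+1-(s+r), D.map (· - (r+s)), hs1, fun h0 => absurd h0 (by omega),
      by omega, ?_, ?_, ?_⟩
    · apply unshift_perm (m := r+s)
      have : r + s + 1 = s + r + 1 := by omega
      rw [this, show n+1-(s+r) = n+1-(s+r) from rfl]
      exact hDperm
    · have havD : AvoidsAll D := avoidsAll_sublist (hDsubC.trans hCsub) hav
      rw [← avoidsAll_map (m := r+s), shift_unshift hDge']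
      exact havD
    · show ((s+1)::A') ++ 1 :: C = glue r s (D.map (· - (r+s)))
      rw [glue, shift_unshift hDge', blockL, hAeq, ← hLD, hLeq, range'_one_eq hs1]
      simp [List.append_assoc]

lemma split_one_unique {F₁ G₁ F₂ G₂ : List ℕ} (h1 : (1:ℕ) ∉ F₁) (h2 : (1:ℕ) ∉ F₂)
    (h : F₁ ++ 1 :: G₁ = F₂ ++ 1 :: G₂) : F₁ = F₂ ∧ G₁ = G₂ := by
  induction F₁ generalizing F₂ with
  | nil =>
    cases F₂ with
    | nil => simpa using h
    | cons y F₂' =>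
      exfalso
      simp only [List.nil_append, List.cons_append, List.cons.injEq] at h
      exact h2 (by simp [← h.1])
  | cons x F₁' ih =>
    cases F₂ with
    | nil =>
      exfalso
      simp only [List.nil_append, List.cons_append, List.cons.injEq] at h
      exact h1 (by simp [h.1])
    | cons y F₂' =>
      simp only [List.cons_append, List.cons.injEq] at h
      obtain ⟨rfl, h'⟩ := h
      have := ih (fun hm => h1 (by simp [hm])) (fun hm => h2 (by simp [hm])) h'
      exact ⟨by rw [this.1], this.2⟩

lemma glue_split (r s : ℕ) (ρ : List ℕ) (hs : 1 ≤ s) :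
    glue r s ρ = List.range' (s+1) r ++ 1 :: (List.range' 2 (s-1) ++ ρ.map (· + (r+s))) := by
  rw [glue, blockL, range'_one_eq hs]
  simp [List.append_assoc]

lemma glue_inj {r s k r' s' k' : ℕ} {ρ ρ' : List ℕ} (hs : 1 ≤ s) (hs' : 1 ≤ s')
    (h0 : r = 0 → s = 1) (h0' : r' = 0 → s' = 1)
    (hρ : ρ.Perm (List.range' 1 k)) (hρ' : ρ'.Perm (List.range' 1 k'))
    (h : glue r s ρ = glue r' s' ρ') : r = r' ∧ s = s' ∧ k = k' ∧ ρ = ρ' := by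
  rw [glue_split r s ρ hs, glue_split r' s' ρ' hs'] at h
  have h1F : (1:ℕ) ∉ List.range' (s+1) r := by
    rw [List.mem_range'_1]; omega
  have h1F' : (1:ℕ) ∉ List.range' (s'+1) r' := by
    rw [List.mem_range'_1]; omega
  obtain ⟨hF, hG⟩ := split_one_unique h1F h1F' h
  have hrr : r = r' := by
    have := congrArg List.length hF
    simpa using this
  subst hrr
  have hss : s = s' := by
    rcases Nat.eq_zero_or_pos r with rfl | hr
    · rw [h0 rfl, h0' rfl]
    · have hm1 : s + 1 ∈ List.range' (s+1) r := List.mem_range'_1.mpr (by omega)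
      have hm2 : s' + 1 ∈ List.range' (s'+1) r := List.mem_range'_1.mpr (by omega)
      rw [hF] at hm1
      rw [← hF] at hm2
      rw [List.mem_range'_1] at hm1 hm2
      omega
  subst hss
  have hmap : ρ.map (· + (r+s)) = ρ'.map (· + (r+s)) := by
    have := List.append_cancel_left hG
    exact this
  have hρρ : ρ = ρ' := by
    have hinj : Function.Injective (· + (r+s)) := fun a b hab => by
      simpa using hab
    exact List.map_injective_iff.mpr hinj hmap
  subst hρρ
  refine ⟨rfl, rfl, ?_, rfl⟩
  have e1 : ρ.length = k := by simpa using hρ.length_eq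
  have e2 : ρ.length = k' := by simpa using hρ'.length_eq
  omega

/-! ### counting -/

abbrev AvT (n : ℕ) : Type := {π : List ℕ // IsPermList n π ∧ AvoidsAll π}

instance AvT.finite (n : ℕ) : Finite (AvT n) := by
  have h : {π : List ℕ | IsPermList n π ∧ AvoidsAll π}.Finite :=
    Set.Finite.subset (List.finite_toSet ((List.range' 1 n).permutations))
      (fun π hπ => List.mem_permutations.mpr hπ.1)
  exact h.to_subtype

noncomputable def N (n : ℕ) : ℕ := Nat.card (AvT n)

def Src (j : ℕ) : Type := AvT j ⊕ (Σ k : Fin j, Fin (j - (k:ℕ)) × AvT (k:ℕ))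

instance Src.finite (j : ℕ) : Finite (Src j) := by
  unfold Src; infer_instance

noncomputable def gmap (j : ℕ) : Src j → AvT (j+1) := fun z =>
  match z with
  | .inl ρ => ⟨glue 0 1 ρ.val, by
      constructor
      · show (glue 0 1 ρ.val).Perm (List.range' 1 (j+1))
        have := glue_perm (r := 0) (s := 1) ρ.prop.1
        rwa [show 0+1+j = j+1 by omega] at this
      · exact avoidsAll_glue ρ.prop.1 ρ.prop.2⟩
  | .inr ⟨k, i, ρ⟩ => ⟨glue ((i:ℕ)+1) (j - (k:ℕ) - (i:ℕ)) ρ.val, by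
      have hik : (i:ℕ) < j - (k:ℕ) := i.isLt
      have hkj : (k:ℕ) < j := k.isLt
      constructor
      · show (glue _ _ ρ.val).Perm (List.range' 1 (j+1))
        have hp := glue_perm (r := (i:ℕ)+1) (s := j - (k:ℕ) - (i:ℕ)) ρ.prop.1
        have he : (i:ℕ)+1 + (j - (k:ℕ) - (i:ℕ)) + (k:ℕ) = j + 1 := by omega
        rwa [he] at hp
      · exact avoidsAll_glue ρ.prop.1 ρ.prop.2⟩

lemma gmap_injective (j : ℕ) : Function.Injective (gmap j) := by
  intro z w h
  have hv : (gmap j z).val = (gmap j w).val := congrArg Subtype.val h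
  rcases z with ρ | ⟨k, i, ρ⟩ <;> rcases w with ρ' | ⟨k', i', ρ'⟩
  · simp only [gmap] at hv
    obtain ⟨_, _, _, h4⟩ := glue_inj (le_refl 1) (le_refl 1) (fun _ => rfl) (fun _ => rfl)
      ρ.prop.1 ρ'.prop.1 hv
    exact congrArg Sum.inl (Subtype.ext h4)
  · simp only [gmap] at hv
    have hik : (i':ℕ) < j - (k':ℕ) := i'.isLt
    obtain ⟨h1', _, _, _⟩ := glue_inj (le_refl 1) (by omega) (fun _ => rfl) (by omega)
      ρ.prop.1 ρ'.prop.1 hv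
    omega
  · simp only [gmap] at hv
    have hik : (i:ℕ) < j - (k:ℕ) := i.isLt
    obtain ⟨h1', _, _, _⟩ := glue_inj (by omega) (le_refl 1) (by omega) (fun _ => rfl)
      ρ.prop.1 ρ'.prop.1 hv
    omega
  · simp only [gmap] at hv
    have hik : (i:ℕ) < j - (k:ℕ) := i.isLt
    have hik' : (i':ℕ) < j - (k':ℕ) := i'.isLt
    have hkj : (k:ℕ) < j := k.isLt
    have hkj' : (k':ℕ) < j := k'.isLt
    obtain ⟨h1', h2', h3', h4'⟩ := glue_inj (by omega) (by omega) (by omega) (by omega)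
      ρ.prop.1 ρ'.prop.1 hv
    have hkk : k = k' := Fin.ext (by omega)
    subst hkk
    have hii : i = i' := Fin.ext (by omega)
    subst hii
    have hrr : ρ = ρ' := Subtype.ext h4'
    subst hrr
    rfl

lemma gmap_surjective (j : ℕ) : Function.Surjective (gmap j) := by
  intro π
  obtain ⟨r, s, k, ρ, hs, h0, hsum, hρp, hρa, heq⟩ := decomp (n := j) π.prop.1 π.prop.2
  rcases Nat.eq_zero_or_pos r with rfl | hr
  · have hs1 : s = 1 := h0 rfl
    subst hs1
    have hkj : k = j := by omega
    subst hkj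
    refine ⟨Sum.inl ⟨ρ, hρp, hρa⟩, ?_⟩
    apply Subtype.ext
    exact heq.symm
  · have hkj : (k:ℕ) < j := by omega
    have hij : r - 1 < j - k := by omega
    refine ⟨Sum.inr ⟨⟨k, hkj⟩, ⟨r-1, hij⟩, ⟨ρ, hρp, hρa⟩⟩, ?_⟩
    apply Subtype.ext
    show glue ((r-1)+1) (j - k - (r-1)) ρ = π.val
    have e1 : (r-1)+1 = r := by omega
    have e2 : j - k - (r-1) = s := by omega
    rw [e1, e2]
    exact heq.symm

lemma M (j : ℕ) : N (j+1) = N j + ∑ k ∈ Finset.range j, (j - k) * N k := by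
  classical
  letI : ∀ m : ℕ, Fintype (AvT m) := fun m => Fintype.ofFinite _
  have hcard : Nat.card (Src j) = Nat.card (AvT (j+1)) :=
    Nat.card_eq_of_bijective _ ⟨gmap_injective j, gmap_surjective j⟩
  have h1 : Nat.card (Src j) = N j + ∑ k ∈ Finset.range j, (j - k) * N k := by
    rw [Src, Nat.card_sum]
    congr 1
    rw [Nat.card_eq_fintype_card, Fintype.card_sigma,
      ← Fin.sum_univ_eq_sum_range (fun k => (j - k) * N k) j]
    apply Finset.sum_congr rfl
    intro k _
    rw [Fintype.card_prod, Fintype.card_fin, N, Nat.card_eq_fintype_card]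
  rw [show N (j+1) = Nat.card (AvT (j+1)) from rfl, ← hcard, h1]

lemma avoidsAll_nil : AvoidsAll ([] : List ℕ) := by
  rw [avoidsAll_iff]
  refine ⟨?_, ?_, ?_⟩
  · rintro ⟨a,b,c,hab,hbc,hs⟩; simp at hs
  · rintro ⟨a,b,c,d,hab,hbc,hcd,hs⟩; simp at hs
  · rintro ⟨a,b,c,d,hab,hbc,hcd,hs⟩; simp at hs

lemma N0 : N 0 = 1 := by
  haveI : Unique (AvT 0) := {
    default := ⟨[], ⟨List.Perm.refl _, avoidsAll_nil⟩⟩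
    uniq := fun π => Subtype.ext (by
      have h := π.prop.1
      exact List.Perm.eq_nil h) }
  exact Nat.card_unique

noncomputable def Ssum (j : ℕ) : ℕ := ∑ k ∈ Finset.range j, (j - k) * N k
noncomputable def Psum (j : ℕ) : ℕ := ∑ k ∈ Finset.range (j+1), N k

lemma M' (j : ℕ) : N (j+1) = N j + Ssum j := M j

lemma hS (j : ℕ) : Ssum (j+1) = Ssum j + Psum j := by
  unfold Ssum Psum
  have e1 : ∀ k ∈ Finset.range (j+1), (j+1-k) * N k = (j-k) * N k + N k := by
    intro k hk
    have hkj : k ≤ j := by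
      have := Finset.mem_range.mp hk; omega
    have : j + 1 - k = (j - k) + 1 := by omega
    rw [this, Nat.succ_mul]
  rw [Finset.sum_congr rfl e1, Finset.sum_add_distrib, Finset.sum_range_succ ((fun k => (j-k) * N k))]
  simp

lemma hP (j : ℕ) : Psum (j+1) = Psum j + N (j+1) := by
  unfold Psum
  rw [Finset.sum_range_succ]

lemma key (j : ℕ) : N (j+3) + 2 * N (j+1) = 3 * N (j+2) + N j := by
  have m0 : N (j+1) = N j + Ssum j := M' j
  have m1 : N (j+2) = N (j+1) + Ssum (j+1) := M' (j+1)
  have m2 : N (j+3) = N (j+2) + Ssum (j+2) := M' (j+2)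
  have s1 : Ssum (j+1) = Ssum j + Psum j := hS j
  have s2 : Ssum (j+2) = Ssum (j+1) + Psum (j+1) := hS (j+1)
  have p1 : Psum (j+1) = Psum j + N (j+1) := hP j
  omega

lemma N1 : N 1 = 1 := by
  have := M' 0
  rw [N0] at this
  simpa [Ssum] using this

lemma N2 : N 2 = 2 := by
  have := M' 1
  rw [N1] at this
  rw [this]
  simp [Ssum, N0]

lemma N3 : N 3 = 5 := by
  have := M' 2
  rw [N2] at this
  rw [this, Ssum, Finset.sum_range_succ, Finset.sum_range_one, N0, N1]
  norm_num

end AvRec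

/-- Let `a n` be the number of permutations of `[n]` avoiding 321, 2413 and 3142.
Then `a 1 = 1`, `a 2 = 2`, `a 3 = 5` and `a n = 3 a_{n-1} - 2 a_{n-2} + a_{n-3}` for `n ≥ 4`. -/
theorem av_count_recurrence (a : ℕ → ℕ)
    (ha : ∀ n, a n = Nat.card {π : List ℕ // IsPermList n π ∧ AvoidsAll π}) :
    a 1 = 1 ∧ a 2 = 2 ∧ a 3 = 5 ∧
      ∀ n, 4 ≤ n → (a n : ℤ) = 3 * a (n - 1) - 2 * a (n - 2) + a (n - 3) := by
  have hN : ∀ n, a n = AvRec.N n := fun n => (ha n).trans rfl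
  refine ⟨by rw [hN]; exact AvRec.N1, by rw [hN]; exact AvRec.N2,
    by rw [hN]; exact AvRec.N3, ?_⟩
  intro n hn
  obtain ⟨j, rfl⟩ : ∃ j, n = j + 4 := ⟨n - 4, by omega⟩
  have hk : AvRec.N (j+4) + 2 * AvRec.N (j+2) = 3 * AvRec.N (j+3) + AvRec.N (j+1) :=
    AvRec.key (j+1)
  have e1 : j + 4 - 1 = j + 3 := rfl
  have e2 : j + 4 - 2 = j + 2 := rfl
  have e3 : j + 4 - 3 = j + 1 := rfl
  rw [e1, e2, e3, hN, hN, hN, hN]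
  omega
end

section
/- For every n ≥ 2, the number of sequences of 'clusters' on [n] equals F_{2n−1}: a list of clusters is determined by choosing k numbers from [n] (k = 0 or 2 ≤ k ≤ n) and a composition of k into parts each at least 2; hence the count is 1 + ∑_{k=2}^{n} C(n,k) F_{k−1} = F_{2n−1}. -/
open Finset

/-- `dd k` is the number of compositions of `k` into parts all `≥ 2`. -/
private def dd : ℕ → ℕ
  | 0 => 1
  | k + 1 => Nat.fib k

private lemma dd_succ (k : ℕ) : dd (k + 1) = Nat.fib k := rfl

private lemma fib_succ_dd (k : ℕ) : Nat.fib (k + 1) = Nat.fib k + dd k := by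
  cases k with
  | zero => simp [dd]
  | succ m => rw [Nat.fib_add_two, dd_succ, Nat.add_comm]

/-- Compositions into parts at least 2. -/
private def CompGE2 (k : ℕ) : Type := {l : List ℕ // (∀ x ∈ l, 2 ≤ x) ∧ l.sum = k}

private instance compGE2_finite (k : ℕ) : Finite (CompGE2 k) := by
  apply Finite.of_injective
    (fun l : CompGE2 k => (⟨l.1, fun {i} hi => by have := l.2.1 i hi; omega, l.2.2⟩ : Composition k))
  intro a b h
  exact Subtype.ext (congrArg Composition.blocks h)

private lemma compGE2_zero : Nat.card (CompGE2 0) = 1 := by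
  haveI : Unique (CompGE2 0) := by
    refine ⟨⟨⟨[], by simp, rfl⟩⟩, ?_⟩
    rintro ⟨l, h1, h2⟩
    apply Subtype.ext
    cases l with
    | nil => rfl
    | cons a t =>
      exfalso
      have := h1 a (by simp)
      simp [List.sum_cons] at h2
      omega
  exact Nat.card_unique

private lemma compGE2_one : Nat.card (CompGE2 1) = 0 := by
  haveI : IsEmpty (CompGE2 1) := by
    constructor
    rintro ⟨l, h1, h2⟩
    cases l with
    | nil => simp at h2
    | cons a t =>
      have := h1 a (by simp)
      simp [List.sum_cons] at h2
      omega
  exact Nat.card_of_isEmpty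

private def compRecEquiv (k : ℕ) : CompGE2 (k + 2) ≃ (CompGE2 (k + 1)) ⊕ (CompGE2 k) where
  toFun := fun x =>
    match x with
    | ⟨[], h⟩ => absurd h.2 (by simp)
    | ⟨a :: t, h⟩ =>
      if ha : a = 2 then
        Sum.inr ⟨t, fun y hy => h.1 y (List.mem_cons_of_mem _ hy), by
          have := h.2; simp only [List.sum_cons] at this; omega⟩
      else
        Sum.inl ⟨(a - 1) :: t, by
          intro y hy
          rcases List.mem_cons.1 hy with rfl | hy
          · have := h.1 a (by simp); omega
          · exact h.1 y (List.mem_cons_of_mem _ hy), by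
          have := h.2; have ha2 := h.1 a (by simp)
          simp only [List.sum_cons] at this ⊢; omega⟩
  invFun := fun y =>
    match y with
    | Sum.inl ⟨[], h⟩ => absurd h.2 (by simp)
    | Sum.inl ⟨b :: s, h⟩ =>
      ⟨(b + 1) :: s, by
        intro y hy
        rcases List.mem_cons.1 hy with rfl | hy
        · have := h.1 b (by simp); omega
        · exact h.1 y (List.mem_cons_of_mem _ hy), by
        have := h.2; simp only [List.sum_cons] at this ⊢; omega⟩
    | Sum.inr ⟨m, h⟩ =>
      ⟨2 :: m, by
        intro y hy
        rcases List.mem_cons.1 hy with rfl | hy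
        · omega
        · exact h.1 y hy, by
        have := h.2; simp only [List.sum_cons]; omega⟩
  left_inv := by
    rintro ⟨l, h⟩
    cases l with
    | nil => exact absurd h.2 (by simp)
    | cons a t =>
      by_cases ha : a = 2
      · simp only [ha, dif_pos]
        rfl
      · simp only [dif_neg ha]
        apply Subtype.ext
        have := h.1 a (by simp)
        simp only []
        congr 1
        omega
  right_inv := by
    rintro (⟨m, h⟩ | ⟨m, h⟩)
    · cases m with
      | nil => exact absurd h.2 (by simp)
      | cons b s =>
        have hb : ¬ (b + 1 = 2) := by have := h.1 b (by simp); omega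
        simp only [dif_neg hb]
        congr 1
    · simp

private lemma compGE2_card : ∀ k, Nat.card (CompGE2 k) = dd k := by
  have H : ∀ k, Nat.card (CompGE2 (k + 2))
      = Nat.card (CompGE2 (k + 1)) + Nat.card (CompGE2 k) := fun k => by
    rw [Nat.card_congr (compRecEquiv k), Nat.card_sum]
  intro k
  induction k using Nat.strong_induction_on with
  | _ k ih =>
    match k with
    | 0 => exact compGE2_zero
    | 1 => exact compGE2_one
    | (m + 2) =>
      rw [H m, ih (m + 1) (by omega), ih m (by omega), dd_succ,
        show dd (m + 2) = Nat.fib (m + 1) from rfl, fib_succ_dd]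
private lemma sum_dd_fib (n : ℕ) :
    (∑ k ∈ range (n + 2), (n + 1).choose k * dd k) = Nat.fib (2 * n + 1) ∧
    (∑ k ∈ range (n + 2), (n + 1).choose k * Nat.fib k) = Nat.fib (2 * n + 2) := by
  induction n with
  | zero =>
    constructor <;> simp [Finset.sum_range_succ, dd]
  | succ n ih =>
    obtain ⟨ihA, ihB⟩ := ih
    have hA := Finset.sum_choose_succ_mul (R := ℕ) (fun i _ => dd i) (n + 1)
    have hB := Finset.sum_choose_succ_mul (R := ℕ) (fun i _ => Nat.fib i) (n + 1)
    simp only [Nat.cast_id] at hA hB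
    constructor
    · rw [hA]
      have h2 : (∑ i ∈ range (n + 2), (n + 1).choose i * dd (i + 1))
          = ∑ i ∈ range (n + 2), (n + 1).choose i * Nat.fib i := by
        refine Finset.sum_congr rfl fun i _ => by rw [dd_succ]
      rw [h2, ihA, ihB]
      have fibx : ∀ m : ℕ, Nat.fib (m + 2) = Nat.fib m + Nat.fib (m + 1) :=
        fun m => Nat.fib_add_two
      rw [show 2 * (n + 1) + 1 = 2 * n + 1 + 2 from by ring, fibx (2 * n + 1),
        show 2 * n + 1 + 1 = 2 * n + 2 from rfl, fibx (2 * n)]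
    · rw [hB]
      have h2 : (∑ i ∈ range (n + 2), (n + 1).choose i * Nat.fib (i + 1))
          = (∑ i ∈ range (n + 2), (n + 1).choose i * Nat.fib i)
            + ∑ i ∈ range (n + 2), (n + 1).choose i * dd i := by
        rw [← Finset.sum_add_distrib]
        refine Finset.sum_congr rfl fun i _ => by rw [fib_succ_dd, Nat.mul_add]
      rw [h2, ihA, ihB]
      have fibx : ∀ m : ℕ, Nat.fib (m + 2) = Nat.fib m + Nat.fib (m + 1) :=
        fun m => Nat.fib_add_two
      rw [show 2 * (n + 1) + 2 = 2 * n + 2 + 2 from by ring, fibx (2 * n + 2),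
        show 2 * n + 2 + 1 = 2 * n + 1 + 2 from rfl, fibx (2 * n + 1),
        show 2 * n + 1 + 1 = 2 * n + 2 from rfl, fibx (2 * n)]
      ring
private def clusterEquiv (n : ℕ) :
    {L : List (List ℕ) //
        (∀ b ∈ L, 2 ≤ b.length) ∧
        L.flatten.Pairwise (· < ·) ∧
        (∀ x ∈ L.flatten, 1 ≤ x ∧ x ≤ n)} ≃
    {p : ((Finset.Icc 1 n).powerset : Finset (Finset ℕ)) × List ℕ //
        (∀ x ∈ p.2, 2 ≤ x) ∧ p.2.sum = (p.1 : Finset ℕ).card} where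
  toFun := fun L =>
    ⟨(⟨L.1.flatten.toFinset, by
        rw [Finset.mem_powerset]
        intro x hx
        rw [List.mem_toFinset] at hx
        have := L.2.2.2 x hx
        rw [Finset.mem_Icc]
        omega⟩, L.1.map List.length), by
      constructor
      · intro x hx
        obtain ⟨b, hb, rfl⟩ := List.mem_map.1 hx
        exact L.2.1 b hb
      · have hnd : L.1.flatten.Nodup := L.2.2.1.imp ne_of_lt
        rw [← List.length_flatten, List.toFinset_card_of_nodup hnd]⟩
  invFun := fun p =>
    ⟨((p.1.1 : Finset ℕ).sort (· ≤ ·)).splitWrtComposition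
      (⟨p.1.2, fun {i} hi => by have := p.2.1 i hi; omega,
        by rw [Finset.length_sort]; exact p.2.2⟩ :
        Composition ((p.1.1 : Finset ℕ).sort (· ≤ ·)).length), by
      refine ⟨?_, ?_, ?_⟩
      · intro b hb
        have : b.length ∈ (((p.1.1 : Finset ℕ).sort (· ≤ ·)).splitWrtComposition
            ⟨p.1.2, _, _⟩).map List.length := List.mem_map_of_mem hb
        rw [List.map_length_splitWrtComposition] at this
        exact p.2.1 _ this
      · rw [List.flatten_splitWrtComposition]
        exact (Finset.sortedLT_sort _).pairwise
      · intro x hx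
        rw [List.flatten_splitWrtComposition, Finset.mem_sort] at hx
        have := Finset.mem_powerset.1 p.1.1.2 hx
        rw [Finset.mem_Icc] at this
        omega⟩
  left_inv := by
    rintro ⟨L, h1, h2, h3⟩
    apply Subtype.ext
    dsimp only
    have hnd : L.flatten.Nodup := h2.imp ne_of_lt
    have hsort : (L.flatten.toFinset).sort (· ≤ ·) = L.flatten :=
      (List.toFinset_sort (· ≤ ·) hnd).2 (h2.imp le_of_lt)
    show List.splitWrtCompositionAux ((L.flatten.toFinset).sort (· ≤ ·))
      (L.map List.length) = L
    rw [hsort]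
    exact List.splitWrtComposition_flatten L
      ⟨L.map List.length, fun {i} hi => by
          obtain ⟨b, hb, rfl⟩ := List.mem_map.1 hi
          have := h1 b hb; omega,
        List.length_flatten.symm⟩ rfl
  right_inv := by
    rintro ⟨⟨s, c⟩, hc⟩
    apply Subtype.ext
    dsimp only
    refine Prod.ext ?_ ?_
    · apply Subtype.ext
      dsimp only
      rw [List.flatten_splitWrtComposition]
      exact Finset.sort_toFinset _ _
    · exact List.map_length_splitWrtComposition _ _
/-- The number of lists of clusters on `[n]` equals `F_{2n-1}`: a list of
clusters is a list of blocks, each of size at least 2, whose concatenation is a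
strictly increasing sequence of elements of `[n]`. -/
theorem cluster_lists_card (n : ℕ) (hn : 2 ≤ n) :
    Nat.card {L : List (List ℕ) //
        (∀ b ∈ L, 2 ≤ b.length) ∧
        L.flatten.Pairwise (· < ·) ∧
        (∀ x ∈ L.flatten, 1 ≤ x ∧ x ≤ n)} = Nat.fib (2 * n - 1) := by
  obtain ⟨m, rfl⟩ : ∃ m, n = m + 1 := ⟨n - 1, by omega⟩
  rw [Nat.card_congr (clusterEquiv (m + 1))]
  rw [Nat.card_congr (Equiv.subtypeProdEquivSigmaSubtype
    (fun (a : (((Finset.Icc 1 (m + 1)).powerset : Finset (Finset ℕ)) : Type)) (b : List ℕ) =>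
      (∀ x ∈ b, 2 ≤ x) ∧ b.sum = (a : Finset ℕ).card))]
  haveI : ∀ a : (((Finset.Icc 1 (m + 1)).powerset : Finset (Finset ℕ)) : Type),
      Finite {b : List ℕ // (∀ x ∈ b, 2 ≤ x) ∧ b.sum = (a : Finset ℕ).card} :=
    fun a => compGE2_finite ((a : Finset ℕ).card)
  haveI : ∀ a : (((Finset.Icc 1 (m + 1)).powerset : Finset (Finset ℕ)) : Type),
      Fintype {b : List ℕ // (∀ x ∈ b, 2 ≤ x) ∧ b.sum = (a : Finset ℕ).card} :=
    fun a => Fintype.ofFinite _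
  rw [Nat.card_eq_fintype_card, Fintype.card_sigma]
  have hc : ∀ a : (((Finset.Icc 1 (m + 1)).powerset : Finset (Finset ℕ)) : Type),
      Fintype.card {b : List ℕ // (∀ x ∈ b, 2 ≤ x) ∧ b.sum = (a : Finset ℕ).card}
        = dd (a : Finset ℕ).card := fun a => by
    rw [← Nat.card_eq_fintype_card]
    exact compGE2_card ((a : Finset ℕ).card)
  rw [Finset.sum_congr rfl fun a _ => hc a]
  rw [Finset.sum_coe_sort ((Finset.Icc 1 (m + 1)).powerset) (fun s => dd s.card)]
  rw [Finset.sum_powerset_apply_card dd]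
  have hIcc : (Finset.Icc 1 (m + 1)).card = m + 1 := by
    rw [Nat.card_Icc]; omega
  rw [hIcc]
  simp only [smul_eq_mul]
  have := (sum_dd_fib m).1
  rw [show m + 1 + 1 = m + 2 from rfl, this, show 2 * (m + 1) - 1 = 2 * m + 1 from by omega]
end
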